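/- arXiv:2602.09623 — 4 statements merged into one kernel-verified Lean document; each statement's English description precedes it below -/
import Mathlib

section
/- Let G be a finite simple graph with a clique vertex-partition Π = {W_1, …, W_p}, and let t ≥ 2 be an integer. Then the t-clique-free complex CF_t(G(Π, t)) of the t-clique whiskering is pure: every facet of CF_t(G(Π, t)) has exactly p(t−1) vertices. -/
/-- The `t`-clique-free complex of a graph `G`: faces are the finite vertex sets
containing no `t`-clique of `G`. -/
def cliqueFreeComplex {V : Type*} (G : SimpleGraph V) (t : ℕ) : Set (Finset V) :=
  {A : Finset V | ∀ B ⊆ A, ¬ G.IsNClique t B}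

/-- A clique vertex-partition of `G`: a family `W 1, …, W p` of pairwise disjoint
(possibly empty) cliques of `G` whose union is `V(G)`. -/
structure IsCliqueVertexPartition {V : Type*} (G : SimpleGraph V) {p : ℕ}
    (W : Fin p → Finset V) : Prop where
  disjoint : ∀ i j, i ≠ j → Disjoint (W i) (W j)
  cover : ∀ v : V, ∃ i, v ∈ W i
  clique : ∀ i, G.IsClique ↑(W i)

/-- The defining relation of the `t`-clique whiskering `G(Π, t)`: keep the edges of
`G` and, for each part `W i`, make `W i` together with the `t - 1` new vertices
`x_{i,1}, …, x_{i,t-1}` (`Sum.inr (i, k)`) into a clique. -/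
def whiskerRel {V : Type*} (G : SimpleGraph V) {p : ℕ} (W : Fin p → Finset V)
    (t : ℕ) : (V ⊕ Fin p × Fin (t - 1)) → (V ⊕ Fin p × Fin (t - 1)) → Prop
  | Sum.inl a, Sum.inl b => G.Adj a b
  | Sum.inl a, Sum.inr q => a ∈ W q.1
  | Sum.inr q, Sum.inl a => a ∈ W q.1
  | Sum.inr q, Sum.inr r => q.1 = r.1

/-- The `t`-clique whiskering `G(Π, t)` of `G` with respect to the clique
vertex-partition `Π = {W 1, …, W p}`. -/
def whiskerGraph {V : Type*} (G : SimpleGraph V) {p : ℕ} (W : Fin p → Finset V)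
    (t : ℕ) : SimpleGraph (V ⊕ Fin p × Fin (t - 1)) :=
  SimpleGraph.fromRel (whiskerRel G W t)

/-- The facets (maximal faces) of a simplicial complex. -/
def Facets {V : Type*} (Δ : Set (Finset V)) : Set (Finset V) :=
  {F | F ∈ Δ ∧ ∀ A ∈ Δ, F ⊆ A → F = A}

/-- `CF_t(G(Π, t))` is pure: every facet has exactly `p * (t - 1)`
vertices. -/
theorem statement14 {V : Type*} [Fintype V] [DecidableEq V]
    (G : SimpleGraph V) (p : ℕ) (W : Fin p → Finset V)
    (hPi : IsCliqueVertexPartition G W) (t : ℕ) (ht : 2 ≤ t) :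
    ∀ F ∈ Facets (cliqueFreeComplex (whiskerGraph G W t) t),
      F.card = p * (t - 1) := by
  classical
  intro F hF
  obtain ⟨hFace, hMax⟩ := hF
  set H := whiskerGraph G W t with hH
  set P : Fin p → (V ⊕ Fin p × Fin (t-1)) → Prop :=
    fun i x => Sum.elim (· ∈ W i) (fun q => q.1 = i) x with hP
  have hAdj : ∀ i x y, P i x → P i y → x ≠ y → H.Adj x y := by
    rintro i (a|q) (b|r) hx hy hxy <;>
      simp only [hP, Sum.elim_inl, Sum.elim_inr] at hx hy <;>
      rw [hH, whiskerGraph, SimpleGraph.fromRel_adj] <;>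
      refine ⟨hxy, Or.inl ?_⟩
    · exact hPi.clique i (by simpa using hx) (by simpa using hy)
        (fun h => hxy (by rw [h]))
    · show a ∈ W r.1; rw [hy]; exact hx
    · show b ∈ W q.1; rw [hx]; exact hy
    · show q.1 = r.1; rw [hx, hy]
  have hub : ∀ i, (F.filter (P i)).card ≤ t - 1 := by
    intro i
    by_contra h
    push_neg at h
    have h' : t ≤ (F.filter (P i)).card := by omega
    obtain ⟨B, hBsub, hBcard⟩ := Finset.exists_subset_card_eq h'
    refine hFace B (hBsub.trans (Finset.filter_subset _ _)) ⟨?_, hBcard⟩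
    intro x hx y hy hxy
    exact hAdj i x y (Finset.mem_filter.1 (hBsub hx)).2
      (Finset.mem_filter.1 (hBsub hy)).2 hxy
  have hlb : ∀ i, t - 1 ≤ (F.filter (P i)).card := by
    intro i
    by_contra h
    push_neg at h
    have hex : ∃ k : Fin (t-1), (Sum.inr (i, k) : V ⊕ Fin p × Fin (t-1)) ∉ F := by
      by_contra hall
      push_neg at hall
      have hsub : (Finset.univ.image (fun k : Fin (t-1) =>
          (Sum.inr (i,k) : V ⊕ Fin p × Fin (t-1)))) ⊆ F.filter (P i) := by
        intro x hx
        simp only [Finset.mem_image, Finset.mem_univ, true_and] at hx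
        obtain ⟨k, rfl⟩ := hx
        exact Finset.mem_filter.2 ⟨hall k, by simp [hP]⟩
      have hc := Finset.card_le_card hsub
      rw [Finset.card_image_of_injective _ (by intro a b hab; simpa using hab),
        Finset.card_univ, Fintype.card_fin] at hc
      omega
    obtain ⟨k, hk⟩ := hex
    set x := (Sum.inr (i,k) : V ⊕ Fin p × Fin (t-1)) with hx
    have hmem : insert x F ∈ cliqueFreeComplex H t := by
      intro B hB hB2
      obtain ⟨hBclq, hBcard⟩ := hB2
      by_cases hxB : x ∈ B
      · have hsub : B ⊆ insert x (F.filter (P i)) := by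
          intro y hy
          by_cases hyx : y = x
          · simp [hyx]
          · have hyF : y ∈ F := by
              have h1 := hB hy
              rcases Finset.mem_insert.1 h1 with h2 | h2
              · exact absurd h2 hyx
              · exact h2
            have hadj := hBclq (Finset.mem_coe.2 hxB) (Finset.mem_coe.2 hy)
              (Ne.symm hyx)
            have hPy : P i y := by
              rw [hH, whiskerGraph, SimpleGraph.fromRel_adj] at hadj
              obtain ⟨-, h1 | h1⟩ := hadj <;> cases y with
              | inl a => simp only [hx, whiskerRel] at h1; simp [hP, h1]
              | inr r =>
                  simp only [hx, whiskerRel] at h1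
                  simp [hP, h1]
            exact Finset.mem_insert_of_mem (Finset.mem_filter.2 ⟨hyF, hPy⟩)
        have hcle := Finset.card_le_card hsub
        have hxnot : x ∉ F.filter (P i) := fun hc => hk (Finset.mem_filter.1 hc).1
        rw [Finset.card_insert_of_notMem hxnot] at hcle
        omega
      · refine hFace B ?_ ⟨hBclq, hBcard⟩
        intro y hy
        rcases Finset.mem_insert.1 (hB hy) with h2 | h2
        · exact absurd (h2 ▸ hy) hxB
        · exact h2
    have heq := hMax (insert x F) hmem (Finset.subset_insert _ _)
    exact hk (heq ▸ Finset.mem_insert_self x F)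
  have hcards : ∀ i, (F.filter (P i)).card = t - 1 :=
    fun i => le_antisymm (hub i) (hlb i)
  have hFeq : F = Finset.univ.biUnion (fun i => F.filter (P i)) := by
    apply Finset.Subset.antisymm
    · intro x hxF
      rcases x with a | q
      · obtain ⟨i, hi⟩ := hPi.cover a
        exact Finset.mem_biUnion.2 ⟨i, Finset.mem_univ i,
          Finset.mem_filter.2 ⟨hxF, by simp [hP, hi]⟩⟩
      · exact Finset.mem_biUnion.2 ⟨q.1, Finset.mem_univ _,
          Finset.mem_filter.2 ⟨hxF, by simp [hP]⟩⟩
    · intro x hx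
      obtain ⟨i, -, hi⟩ := Finset.mem_biUnion.1 hx
      exact (Finset.mem_filter.1 hi).1
  rw [hFeq, Finset.card_biUnion, Finset.sum_congr rfl (fun i _ => hcards i),
    Finset.sum_const, Finset.card_univ, Fintype.card_fin, smul_eq_mul]
  intro i _ j _ hij
  simp only [Finset.disjoint_left]
  intro x hxi hxj
  have h1 := (Finset.mem_filter.1 hxi).2
  have h2 := (Finset.mem_filter.1 hxj).2
  rcases x with a | q
  · simp only [hP, Sum.elim_inl] at h1 h2
    exact (Finset.disjoint_left.1 (hPi.disjoint i j hij)) h1 h2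
  · simp only [hP, Sum.elim_inr] at h1 h2
    exact hij (h1 ▸ h2 ▸ rfl)
end

section
/- Let G be a finite simple graph with a clique vertex-partition Π = {W_1, …, W_p}, and let t ≥ 2 be an integer. Then the t-clique-free complex CF_t(G(Π, t)) of the t-clique whiskering is (t−2)-decomposable; in particular, CF_t(G(Π, t)) is shellable. -/
/-- Deletion of a face from a simplicial complex: the faces not containing `σ`. -/
def delC {V : Type*} (Δ : Set (Finset V)) (σ : Finset V) : Set (Finset V) :=
  {F | F ∈ Δ ∧ ¬ σ ⊆ F}

/-- Link of a face in a simplicial complex. -/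
def linkC {V : Type*} [DecidableEq V] (Δ : Set (Finset V)) (σ : Finset V) :
    Set (Finset V) :=
  {F | F ∈ Δ ∧ Disjoint F σ ∧ F ∪ σ ∈ Δ}

/-- A shedding face: a face `σ` such that for every face `τ ⊇ σ` and every `v ∈ σ`
there is a vertex `w ∉ τ` with `(τ ∪ {w}) \ {v}` a face. -/
def IsSheddingFace {V : Type*} [DecidableEq V] (Δ : Set (Finset V)) (σ : Finset V) :
    Prop :=
  σ ∈ Δ ∧ ∀ τ ∈ Δ, σ ⊆ τ → ∀ v ∈ σ, ∃ w, w ∉ τ ∧ (insert w τ).erase v ∈ Δ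

/-- A simplex: the void complex, or the full power set of a finite set
(this includes the irrelevant complex `{∅}`). -/
def IsSimplexComplex {V : Type*} (Δ : Set (Finset V)) : Prop :=
  Δ = ∅ ∨ ∃ F : Finset V, Δ = {A : Finset V | A ⊆ F}

/-- `k`-decomposability: `Δ` is a simplex, or has a shedding face `σ` with
`dim σ ≤ k` (i.e. `σ.card ≤ k + 1`) whose deletion and link are `k`-decomposable. -/
inductive KDecomposable {V : Type*} [DecidableEq V] (k : ℕ) : Set (Finset V) → Prop
  | of_simplex {Δ : Set (Finset V)} (h : IsSimplexComplex Δ) : KDecomposable k Δ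
  | of_shedding {Δ : Set (Finset V)} (σ : Finset V) (hshed : IsSheddingFace Δ σ)
      (hdim : σ.card ≤ k + 1) (hdel : KDecomposable k (delC Δ σ))
      (hlink : KDecomposable k (linkC Δ σ)) : KDecomposable k Δ

/-- Shellability: the facets admit a linear order `F 0, …, F (s-1)` such that for all
`i < j` there are `v ∈ F j \ F i` and `l < j` with `F j \ F l = {v}`. -/
def IsShellable {V : Type*} [DecidableEq V] (Δ : Set (Finset V)) : Prop :=
  ∃ (s : ℕ) (F : Fin s → Finset V),
    (∀ i, F i ∈ Facets Δ) ∧ Function.Injective F ∧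
    (∀ A ∈ Facets Δ, ∃ i, F i = A) ∧
    ∀ i j : Fin s, i < j →
      ∃ v ∈ F j \ F i, ∃ l, l < j ∧ F j \ F l = ({v} : Finset V)

set_option linter.unusedSectionVars false
section Shelling
variable {α : Type*} [DecidableEq α] [Fintype α]

def IsDClosed (Δ : Set (Finset α)) : Prop := ∀ ⦃F⦄, F ∈ Δ → ∀ ⦃F'⦄, F' ⊆ F → F' ∈ Δ

lemma delC_dclosed {Δ : Set (Finset α)} (h : IsDClosed Δ) (σ : Finset α) :
    IsDClosed (delC Δ σ) := by
  intro F hF F' hF'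
  exact ⟨h hF.1 hF', fun hs => hF.2 (hs.trans hF')⟩

lemma linkC_dclosed {Δ : Set (Finset α)} (h : IsDClosed Δ) (σ : Finset α) :
    IsDClosed (linkC Δ σ) := by
  intro F hF F' hF'
  exact ⟨h hF.1 hF', Finset.disjoint_of_subset_left hF' hF.2.1,
    h hF.2.2 (Finset.union_subset_union_left hF')⟩

lemma exists_facet (Δ : Set (Finset α)) {τ : Finset α} (hτ : τ ∈ Δ) :
    ∃ F ∈ Facets Δ, τ ⊆ F := by
  obtain ⟨F, hF, hmax⟩ := Set.Finite.exists_maximalFor id {A ∈ Δ | τ ⊆ A}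
    (Set.toFinite _) ⟨τ, hτ, subset_rfl⟩
  exact ⟨F, ⟨hF.1, fun A hA hFA => Finset.Subset.antisymm hFA (hmax ⟨hA, hF.2.trans hFA⟩ hFA)⟩, hF.2⟩

lemma facets_delC {Δ : Set (Finset α)} {σ : Finset α} (hdc : IsDClosed Δ)
    (hshed : IsSheddingFace Δ σ) :
    Facets (delC Δ σ) = {F | F ∈ Facets Δ ∧ ¬ σ ⊆ F} := by
  ext F
  constructor
  · rintro ⟨⟨hFΔ, hFσ⟩, hmax⟩
    refine ⟨⟨hFΔ, fun A hA hFA => ?_⟩, hFσ⟩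
    by_contra hne
    obtain ⟨w, hwA, hwF⟩ := Finset.exists_of_ssubset (lt_of_le_of_ne hFA hne)
    have hwFΔ : insert w F ∈ Δ := hdc hA (Finset.insert_subset hwA hFA)
    have hσw : σ ⊆ insert w F := by
      by_contra hσw
      have := hmax _ ⟨hwFΔ, hσw⟩ (Finset.subset_insert _ _)
      exact hwF (this ▸ Finset.mem_insert_self w F)
    have hwσ : w ∈ σ := by
      by_contra hwσ
      exact hFσ fun z hz => (Finset.mem_insert.1 (hσw hz)).elim
        (fun h => absurd (h ▸ hz) hwσ) id
    obtain ⟨w', hw'τ, hw'⟩ := hshed.2 _ hwFΔ hσw w hwσ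
    have hw'w : w' ≠ w := fun h => hw'τ (h ▸ Finset.mem_insert_self w F)
    have hw'F : w' ∉ F := fun h => hw'τ (Finset.mem_insert_of_mem h)
    have heq : (insert w' (insert w F)).erase w = insert w' F := by
      ext z
      simp only [Finset.mem_erase, Finset.mem_insert]
      constructor
      · rintro ⟨hzw, (rfl | rfl | hz)⟩
        · exact Or.inl rfl
        · exact absurd rfl hzw
        · exact Or.inr hz
      · rintro (rfl | hz)
        · exact ⟨hw'w, Or.inl rfl⟩
        · exact ⟨fun h => hwF (h ▸ hz), Or.inr (Or.inr hz)⟩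
    rw [heq] at hw'
    have hnotσ : ¬ σ ⊆ insert w' F := fun h =>
      (Finset.mem_insert.1 (h hwσ)).elim (fun h => hw'w h.symm) hwF
    have := hmax _ ⟨hw', hnotσ⟩ (Finset.subset_insert _ _)
    exact hw'F (this ▸ Finset.mem_insert_self w' F)
  · rintro ⟨⟨hFΔ, hmax⟩, hFσ⟩
    exact ⟨⟨hFΔ, hFσ⟩, fun A hA hFA => hmax A hA.1 hFA⟩

lemma facets_linkC {Δ : Set (Finset α)} {σ : Finset α} (hdc : IsDClosed Δ) :
    Facets (linkC Δ σ) = {F | Disjoint F σ ∧ F ∪ σ ∈ Facets Δ} := by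
  ext F
  constructor
  · rintro ⟨⟨hFΔ, hdisj, hFσΔ⟩, hmax⟩
    refine ⟨hdisj, hFσΔ, fun A hA hsub => ?_⟩
    have hσA : σ ⊆ A := Finset.union_subset_iff.1 hsub |>.2
    have hAs : A \ σ ∈ linkC Δ σ := by
      refine ⟨hdc hA (Finset.sdiff_subset), Finset.sdiff_disjoint, ?_⟩
      rwa [Finset.sdiff_union_self_eq_union, Finset.union_eq_left.2 hσA]
    have hFA : F ⊆ A \ σ := Finset.subset_sdiff.2
      ⟨(Finset.subset_union_left).trans hsub, hdisj⟩
    have := hmax _ hAs hFA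
    rw [this, Finset.sdiff_union_self_eq_union, Finset.union_eq_left.2 hσA]
  · rintro ⟨hdisj, hfacet, hmax⟩
    refine ⟨⟨hdc hfacet Finset.subset_union_left, hdisj, hfacet⟩, fun A hA hFA => ?_⟩
    have := hmax _ hA.2.2 (Finset.union_subset_union_left hFA)
    have hA' : A = (A ∪ σ) \ σ := by
      rw [Finset.union_sdiff_cancel_right hA.2.1]
    rw [hA', ← this, Finset.union_sdiff_cancel_right hdisj]

theorem shellable_of_kdec {k : ℕ} {Δ : Set (Finset α)} (h : KDecomposable k Δ) :
    IsDClosed Δ → IsShellable Δ := by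
  induction h with
  | @of_simplex Δ h =>
    intro _
    rcases h with rfl | ⟨F0, rfl⟩
    · exact ⟨0, Fin.elim0, fun i => i.elim0, fun i => i.elim0, fun A hA => hA.1.elim,
        fun i => i.elim0⟩
    · have hF0 : F0 ∈ {A : Finset α | A ⊆ F0} := Set.mem_setOf.2 subset_rfl
      refine ⟨1, fun _ => F0, fun i => ⟨hF0, fun A hA h => Finset.Subset.antisymm h hA⟩,
        fun i j _ => Subsingleton.elim i j,
        fun A hA => ⟨0, (hA.2 F0 hF0 hA.1).symm⟩,
        fun i j hij => absurd (Subsingleton.elim i j) (ne_of_lt hij)⟩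
  | @of_shedding Δ σ hshed hdim hdel hlink ihdel ihlink =>
    intro hdc
    obtain ⟨s1, F1, hf1, hinj1, hsurj1, hshell1⟩ := ihdel (delC_dclosed hdc σ)
    obtain ⟨s2, F2, hf2, hinj2, hsurj2, hshell2⟩ := ihlink (linkC_dclosed hdc σ)
    have hFD := facets_delC hdc hshed
    have hFL := facets_linkC (σ := σ) hdc
    have h1 : ∀ i, F1 i ∈ Facets Δ ∧ ¬ σ ⊆ F1 i := fun i => by
      have := hf1 i; rw [hFD] at this; exact this
    have h2 : ∀ j, Disjoint (F2 j) σ ∧ F2 j ∪ σ ∈ Facets Δ := fun j => by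
      have := hf2 j; rw [hFL] at this; exact this
    refine ⟨s1 + s2, Fin.addCases F1 (fun j => F2 j ∪ σ), ?_, ?_, ?_, ?_⟩
    · intro i
      refine Fin.addCases (fun i => ?_) (fun j => ?_) i
      · simp only [Fin.addCases_left]; exact (h1 i).1
      · simp only [Fin.addCases_right]; exact (h2 j).2
    · intro a b
      refine Fin.addCases (fun i => ?_) (fun i => ?_) a <;>
        refine Fin.addCases (fun j => ?_) (fun j => ?_) b <;>
          intro hab <;>
            simp only [Fin.addCases_left, Fin.addCases_right] at hab
      · rw [hinj1 hab]
      · exact absurd (hab ▸ Finset.subset_union_right) (h1 i).2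
      · exact absurd (hab ▸ Finset.subset_union_right) (h1 j).2
      · have : F2 i = F2 j := by
          rw [← Finset.union_sdiff_cancel_right (h2 i).1, hab,
            Finset.union_sdiff_cancel_right (h2 j).1]
        rw [hinj2 this]
    · intro A hA
      by_cases hσA : σ ⊆ A
      · have hB : A \ σ ∈ Facets (linkC Δ σ) := by
          rw [hFL]
          refine ⟨Finset.sdiff_disjoint, ?_⟩
          rwa [Finset.sdiff_union_self_eq_union, Finset.union_eq_left.2 hσA]
        obtain ⟨j, hj⟩ := hsurj2 _ hB
        refine ⟨Fin.natAdd s1 j, ?_⟩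
        simp only [Fin.addCases_right]
        rw [hj, Finset.sdiff_union_self_eq_union, Finset.union_eq_left.2 hσA]
      · obtain ⟨i, hi⟩ := hsurj1 A (by rw [hFD]; exact ⟨hA, hσA⟩)
        exact ⟨Fin.castAdd s2 i, by simp only [Fin.addCases_left]; exact hi⟩
    · intro a b
      refine Fin.addCases (fun i => ?_) (fun i => ?_) a <;>
        refine Fin.addCases (fun j => ?_) (fun j => ?_) b <;>
          intro hab <;>
            simp only [Fin.addCases_left, Fin.addCases_right]
      · -- LL
        have hij : i < j := by
          rw [Fin.lt_def] at hab ⊢; simpa using hab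
        obtain ⟨v, hv, l, hl, he⟩ := hshell1 i j hij
        refine ⟨v, hv, Fin.castAdd s2 l, ?_, ?_⟩
        · rw [Fin.lt_def] at hl ⊢; simpa using hl
        · simp only [Fin.addCases_left]; exact he
      · -- LR : i in del block, j in link block
        obtain ⟨v, hvσ, hvFi⟩ := Finset.not_subset.1 (h1 i).2
        have hFjf : F2 j ∪ σ ∈ Facets Δ := (h2 j).2
        have hσFj : σ ⊆ F2 j ∪ σ := Finset.subset_union_right
        have hvFj : v ∈ F2 j ∪ σ := hσFj hvσ
        obtain ⟨w, hwFj, hwΔ⟩ := hshed.2 _ hFjf.1 hσFj v hvσ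
        have hwv : w ≠ v := fun h => hwFj (h ▸ hvFj)
        obtain ⟨Fl, hFlf, hsub⟩ := exists_facet Δ hwΔ
        have hvFl : v ∉ Fl := by
          intro hvFl
          have hFjFl : F2 j ∪ σ ⊆ Fl := by
            intro z hz
            by_cases hzv : z = v
            · exact hzv ▸ hvFl
            · exact hsub (Finset.mem_erase.2 ⟨hzv, Finset.mem_insert_of_mem hz⟩)
          have heq := hFjf.2 Fl hFlf.1 hFjFl
          exact hwFj (heq ▸ hsub (Finset.mem_erase.2 ⟨hwv, Finset.mem_insert_self _ _⟩))
        obtain ⟨l, hl⟩ := hsurj1 Fl (by rw [hFD]; exact ⟨hFlf, fun h => hvFl (h hvσ)⟩)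
        refine ⟨v, Finset.mem_sdiff.2 ⟨hvFj, hvFi⟩, Fin.castAdd s2 l, ?_, ?_⟩
        · rw [Fin.lt_def]; simp; omega
        · simp only [Fin.addCases_left]
          rw [hl]
          ext z
          simp only [Finset.mem_sdiff, Finset.mem_singleton]
          constructor
          · rintro ⟨hz1, hz2⟩
            by_contra hzv
            exact hz2 (hsub (Finset.mem_erase.2 ⟨hzv, Finset.mem_insert_of_mem hz1⟩))
          · rintro rfl
            exact ⟨hvFj, hvFl⟩
      · -- RL : impossible
        exfalso
        rw [Fin.lt_def] at hab
        simp only [Fin.coe_natAdd, Fin.coe_castAdd] at hab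
        omega
      · -- RR
        have hij : i < j := by
          rw [Fin.lt_def] at hab ⊢
          simp only [Fin.coe_natAdd] at hab
          omega
        obtain ⟨v, hv, l, hl, he⟩ := hshell2 i j hij
        rw [Finset.mem_sdiff] at hv
        have hvσ : v ∉ σ := Finset.disjoint_left.1 (h2 j).1 hv.1
        have hvFl : v ∉ F2 l := by
          have : v ∈ F2 j \ F2 l := he ▸ Finset.mem_singleton_self v
          exact (Finset.mem_sdiff.1 this).2
        refine ⟨v, ?_, Fin.natAdd s1 l, ?_, ?_⟩
        · simp only [Finset.mem_sdiff, Finset.mem_union]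
          exact ⟨Or.inl hv.1, fun h => h.elim hv.2 hvσ⟩
        · rw [Fin.lt_def] at hl ⊢; simp only [Fin.coe_natAdd]; omega
        · simp only [Fin.addCases_right]
          ext z
          simp only [Finset.mem_sdiff, Finset.mem_union, Finset.mem_singleton]
          constructor
          · rintro ⟨hz1 | hz1, hz2⟩
            · have : z ∈ F2 j \ F2 l := Finset.mem_sdiff.2 ⟨hz1, fun h => hz2 (Or.inl h)⟩
              rw [he] at this; exact Finset.mem_singleton.1 this
            · exact absurd (Or.inr hz1) hz2
          · rintro rfl
            exact ⟨Or.inl hv.1, fun h => h.elim hvFl hvσ⟩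

end Shelling

section Whisker
variable {V : Type*} [Fintype V] [DecidableEq V] {p : ℕ}

/-- The whisker vertices of part `i`. -/
def whisk (p : ℕ) (t : ℕ) (i : Fin p) : Finset (V ⊕ Fin p × Fin (t - 1)) :=
  Finset.univ.image (fun k => Sum.inr (i, k))

/-- All vertices attached to part `i` : the part plus its whiskers. -/
def partF (W : Fin p → Finset V) (t : ℕ) (i : Fin p) : Finset (V ⊕ Fin p × Fin (t - 1)) :=
  (W i).image Sum.inl ∪ whisk (V := V) p t i

variable {W : Fin p → Finset V} {t : ℕ} {G : SimpleGraph V}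

@[simp] lemma mem_whisk_inr {i j : Fin p} {k : Fin (t-1)} :
    (Sum.inr (j, k) : V ⊕ Fin p × Fin (t-1)) ∈ whisk (V := V) p t i ↔ j = i := by
  simp [whisk, Prod.ext_iff, eq_comm]

@[simp] lemma mem_whisk_inl {a : V} {i : Fin p} :
    (Sum.inl a : V ⊕ Fin p × Fin (t-1)) ∈ whisk (V := V) p t i ↔ False := by
  simp [whisk]

@[simp] lemma mem_partF_inl {a : V} {i : Fin p} :
    (Sum.inl a : V ⊕ Fin p × Fin (t-1)) ∈ partF W t i ↔ a ∈ W i := by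
  simp [partF]

@[simp] lemma mem_partF_inr {i j : Fin p} {k : Fin (t-1)} :
    (Sum.inr (j, k) : V ⊕ Fin p × Fin (t-1)) ∈ partF W t i ↔ j = i := by
  simp [partF]

lemma whisk_subset_partF {i : Fin p} : whisk (V := V) p t i ⊆ partF W t i :=
  Finset.subset_union_right

lemma whisk_card {i : Fin p} : (whisk (V := V) p t i).card = t - 1 := by
  rw [whisk, Finset.card_image_of_injective _ (fun k l h => by
    simpa [Prod.ext_iff] using h)]
  simp

lemma cf_mono {H : SimpleGraph (V ⊕ Fin p × Fin (t-1))} {A B : Finset (V ⊕ Fin p × Fin (t-1))}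
    (h : A ∈ cliqueFreeComplex H t) (hBA : B ⊆ A) : B ∈ cliqueFreeComplex H t :=
  fun C hC => h C (hC.trans hBA)

lemma cf_dclosed {H : SimpleGraph (V ⊕ Fin p × Fin (t-1))} :
    IsDClosed (cliqueFreeComplex H t) := fun _ hF _ hF' => cf_mono hF hF'

lemma isClique_partF (hW : ∀ i, G.IsClique ↑(W i)) (i : Fin p) :
    (whiskerGraph G W t).IsClique ↑(partF W t i) := by
  intro x hx y hy hne
  rw [Finset.mem_coe] at hx hy
  rw [whiskerGraph, SimpleGraph.fromRel_adj]
  refine ⟨hne, Or.inl ?_⟩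
  match x, y with
  | Sum.inl a, Sum.inl b =>
    exact hW i (by simpa using hx) (by simpa using hy) (by simpa using hne)
  | Sum.inl a, Sum.inr q =>
    have : q.1 = i := by rcases q with ⟨j, k⟩; simpa using hy
    show a ∈ W q.1
    rw [this]; simpa using hx
  | Sum.inr q, Sum.inl a =>
    have : q.1 = i := by rcases q with ⟨j, k⟩; simpa using hx
    show a ∈ W q.1
    rw [this]; simpa using hy
  | Sum.inr q, Sum.inr r =>
    show q.1 = r.1
    rcases q with ⟨j, k⟩; rcases r with ⟨j', k'⟩
    have h1 : j = i := by simpa using hx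
    have h2 : j' = i := by simpa using hy
    simp [h1, h2]

lemma not_cf_of_card_partF (hW : ∀ i, G.IsClique ↑(W i)) {X : Finset (V ⊕ Fin p × Fin (t-1))}
    {i : Fin p} (hX : t ≤ (X ∩ partF W t i).card) :
    X ∉ cliqueFreeComplex (whiskerGraph G W t) t := by
  intro hXcf
  obtain ⟨B, hB, hBcard⟩ := Finset.exists_subset_card_eq hX
  refine hXcf B (hB.trans Finset.inter_subset_left) ⟨?_, hBcard⟩
  exact (isClique_partF hW i).subset (by
    intro z hz
    exact Finset.mem_coe.2 (Finset.inter_subset_right (hB (Finset.mem_coe.1 hz))))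

lemma card_partF_le (hW : ∀ i, G.IsClique ↑(W i)) {X : Finset (V ⊕ Fin p × Fin (t-1))}
    {i : Fin p} (hX : X ∈ cliqueFreeComplex (whiskerGraph G W t) t) :
    (X ∩ partF W t i).card ≤ t - 1 := by
  by_contra h
  push_neg at h
  exact not_cf_of_card_partF hW (i := i) (by omega) hX

lemma clique_subset_partF {B : Finset (V ⊕ Fin p × Fin (t-1))} {i : Fin p} {k : Fin (t-1)}
    (hB : (whiskerGraph G W t).IsClique ↑B) (hk : Sum.inr (i, k) ∈ B) :
    B ⊆ partF W t i := by
  intro z hz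
  by_cases hzk : z = Sum.inr (i, k)
  · subst hzk; simp
  · have hadj := hB (Finset.mem_coe.2 hk) (Finset.mem_coe.2 hz) (fun h => hzk h.symm)
    rw [whiskerGraph, SimpleGraph.fromRel_adj] at hadj
    match z, hadj with
    | Sum.inl a, ⟨_, h⟩ =>
      have : a ∈ W i := by
        rcases h with h | h
        · exact h
        · exact h
      simpa using this
    | Sum.inr ⟨j, l⟩, ⟨_, h⟩ =>
      have : j = i := by
        rcases h with h | h
        · exact h.symm
        · exact h
      simpa using this

/-- The relative complex `E(S, Λ)`. -/
def EC (G : SimpleGraph V) (W : Fin p → Finset V) (t : ℕ)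
    (S Λ : Finset (V ⊕ Fin p × Fin (t-1))) : Set (Finset (V ⊕ Fin p × Fin (t-1))) :=
  {F | F ⊆ S ∧ F ∪ Λ ∈ cliqueFreeComplex (whiskerGraph G W t) t}

/-- The key exchange lemma: a vertex of `partF i` in a face can be swapped for a
whisker vertex of part `i` not yet used. -/
lemma swap_lemma (hW : ∀ i, G.IsClique ↑(W i)) {τ Λ : Finset (V ⊕ Fin p × Fin (t-1))}
    {v x : V ⊕ Fin p × Fin (t-1)} {i : Fin p}
    (hτΛ : τ ∪ Λ ∈ cliqueFreeComplex (whiskerGraph G W t) t)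
    (hv : v ∈ τ) (hvΛ : v ∉ Λ) (hvp : v ∈ partF W t i)
    (hx : x ∈ whisk (V := V) p t i) (hxτΛ : x ∉ τ ∪ Λ) :
    ((insert x τ).erase v) ∪ Λ ∈ cliqueFreeComplex (whiskerGraph G W t) t := by
  intro B hB hBcl
  by_cases hxB : x ∈ B
  · -- B is a clique through the whisker vertex x, hence inside partF i
    obtain ⟨k, -, hk⟩ := Finset.mem_image.1 hx
    have hBpart : B ⊆ partF W t i := clique_subset_partF hBcl.isClique (hk ▸ hxB)
    have hvmem : v ∈ (τ ∪ Λ) ∩ partF W t i :=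
      Finset.mem_inter.2 ⟨Finset.mem_union_left _ hv, hvp⟩
    have hsub : B ⊆ insert x (((τ ∪ Λ) ∩ partF W t i).erase v) := by
      intro z hz
      by_cases hzx : z = x
      · exact hzx ▸ Finset.mem_insert_self _ _
      · refine Finset.mem_insert_of_mem (Finset.mem_erase.2 ⟨?_, Finset.mem_inter.2
          ⟨?_, hBpart hz⟩⟩)
        · rcases Finset.mem_union.1 (hB hz) with h | h
          · exact (Finset.mem_erase.1 h).1
          · exact fun he => hvΛ (he ▸ h)
        · rcases Finset.mem_union.1 (hB hz) with h | h
          · have := (Finset.mem_erase.1 h).2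
            rcases Finset.mem_insert.1 this with h' | h'
            · exact absurd h' hzx
            · exact Finset.mem_union_left _ h'
          · exact Finset.mem_union_right _ h
    have h1 : B.card ≤ 1 + (((τ ∪ Λ) ∩ partF W t i).erase v).card :=
      le_trans (Finset.card_le_card hsub) (by
        rw [add_comm]
        exact Finset.card_insert_le _ _)
    have h2 : (((τ ∪ Λ) ∩ partF W t i).erase v).card
        = ((τ ∪ Λ) ∩ partF W t i).card - 1 := Finset.card_erase_of_mem hvmem
    have h3 : ((τ ∪ Λ) ∩ partF W t i).card ≤ t - 1 := card_partF_le hW hτΛ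
    have h4 : 1 ≤ ((τ ∪ Λ) ∩ partF W t i).card := Finset.card_pos.2 ⟨v, hvmem⟩
    have h5 : B.card = t := hBcl.card_eq
    omega
  · -- B avoids x, hence was already a clique in τ ∪ Λ
    refine hτΛ B (fun z hz => ?_) hBcl
    rcases Finset.mem_union.1 (hB hz) with h | h
    · rcases Finset.mem_insert.1 (Finset.mem_erase.1 h).2 with h' | h'
      · exact absurd (h' ▸ hz) hxB
      · exact Finset.mem_union_left _ h'
    · exact Finset.mem_union_right _ h

/-- Availability of a fresh whisker vertex of part `i`. -/
lemma avail_lemma (hW : ∀ i, G.IsClique ↑(W i)) {S Λ τ : Finset (V ⊕ Fin p × Fin (t-1))}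
    {v : V ⊕ Fin p × Fin (t-1)} {i : Fin p}
    (hdisj : Disjoint S Λ)
    (hinv : t - 1 - (Λ ∩ partF W t i).card ≤ (S ∩ whisk (V := V) p t i).card)
    (hτS : τ ⊆ S) (hτΛ : τ ∪ Λ ∈ cliqueFreeComplex (whiskerGraph G W t) t)
    (hv : v ∈ τ) (hvp : v ∈ partF W t i) (hvw : v ∉ whisk (V := V) p t i) :
    ∃ x ∈ S ∩ whisk (V := V) p t i, x ∉ τ ∪ Λ := by
  by_contra hcon
  push_neg at hcon
  have hsub : S ∩ whisk (V := V) p t i ⊆ τ ∪ Λ := fun x hx => hcon x hx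
  set D := insert v ((S ∩ whisk (V := V) p t i) ∪ (Λ ∩ partF W t i)) with hD
  have hDsub : D ⊆ (τ ∪ Λ) ∩ partF W t i := by
    intro z hz
    rcases Finset.mem_insert.1 hz with rfl | hz
    · exact Finset.mem_inter.2 ⟨Finset.mem_union_left _ hv, hvp⟩
    · rcases Finset.mem_union.1 hz with h | h
      · exact Finset.mem_inter.2 ⟨hsub h,
          whisk_subset_partF (Finset.mem_inter.1 h).2⟩
      · exact Finset.mem_inter.2 ⟨Finset.mem_union_right _ (Finset.mem_inter.1 h).1,
          (Finset.mem_inter.1 h).2⟩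
  have hvnotin : v ∉ (S ∩ whisk (V := V) p t i) ∪ (Λ ∩ partF W t i) := by
    intro h
    rcases Finset.mem_union.1 h with h | h
    · exact hvw (Finset.mem_inter.1 h).2
    · exact (Finset.disjoint_left.1 hdisj (hτS hv)) (Finset.mem_inter.1 h).1
  have hdisj2 : Disjoint (S ∩ whisk (V := V) p t i) (Λ ∩ partF W t i) :=
    Finset.disjoint_of_subset_left Finset.inter_subset_left
      (Finset.disjoint_of_subset_right Finset.inter_subset_left hdisj)
  have hcard : D.card = 1 + ((S ∩ whisk (V := V) p t i).card + (Λ ∩ partF W t i).card) := by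
    rw [hD, Finset.card_insert_of_notMem hvnotin, Finset.card_union_of_disjoint hdisj2]
    omega
  have h1 : D.card ≤ (( τ ∪ Λ) ∩ partF W t i).card := Finset.card_le_card hDsub
  have h2 : ((τ ∪ Λ) ∩ partF W t i).card ≤ t - 1 := card_partF_le hW hτΛ
  have h3 : (Λ ∩ partF W t i).card ≤ t - 1 :=
    le_trans (Finset.card_le_card (fun z hz => Finset.mem_inter.2
      ⟨Finset.mem_union_right _ (Finset.mem_inter.1 hz).1, (Finset.mem_inter.1 hz).2⟩)) h2
  omega

lemma mem_whisk_shape {z : V ⊕ Fin p × Fin (t-1)} {i : Fin p}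
    (hz : z ∈ whisk (V := V) p t i) : ∃ k, z = Sum.inr (i, k) := by
  obtain ⟨k, -, hk⟩ := Finset.mem_image.1 hz
  exact ⟨k, hk.symm⟩

lemma not_mem_partF_of_whisk {z : V ⊕ Fin p × Fin (t-1)} {i j : Fin p}
    (hz : z ∈ whisk (V := V) p t i) (hji : j ≠ i) : z ∉ partF W t j := by
  obtain ⟨k, rfl⟩ := mem_whisk_shape hz
  simp [hji.symm]

lemma not_mem_whisk_of_whisk {z : V ⊕ Fin p × Fin (t-1)} {i j : Fin p}
    (hz : z ∈ whisk (V := V) p t i) (hji : j ≠ i) : z ∉ whisk (V := V) p t j := by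
  obtain ⟨k, rfl⟩ := mem_whisk_shape hz
  simp [hji.symm]

lemma erase_inter_eq {S A : Finset (V ⊕ Fin p × Fin (t-1))} {u} (hu : u ∉ A) :
    (S.erase u) ∩ A = S ∩ A := by
  ext z
  simp only [Finset.mem_inter, Finset.mem_erase]
  exact ⟨fun h => ⟨h.1.2, h.2⟩, fun h => ⟨⟨fun he => hu (he ▸ h.2), h.1⟩, h.2⟩⟩

lemma delC_singleton {S Λ : Finset (V ⊕ Fin p × Fin (t-1))} (v : V ⊕ Fin p × Fin (t-1)) :
    delC (EC G W t S Λ) {v} = EC G W t (S.erase v) Λ := by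
  ext F
  simp only [delC, EC, Set.mem_setOf_eq, Finset.singleton_subset_iff, Finset.subset_erase]
  tauto

lemma link_vertex {S Λ : Finset (V ⊕ Fin p × Fin (t-1))} {v : V ⊕ Fin p × Fin (t-1)}
    (hv : v ∈ S) :
    linkC (EC G W t S Λ) {v} = EC G W t (S.erase v) (insert v Λ) := by
  ext F
  simp only [linkC, EC, Set.mem_setOf_eq, Finset.disjoint_singleton_right,
    Finset.subset_erase]
  constructor
  · rintro ⟨⟨hFS, hFcf⟩, hvF, ⟨-, hcf2⟩⟩
    refine ⟨⟨hFS, hvF⟩, ?_⟩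
    rw [Finset.insert_eq, ← Finset.union_assoc]
    exact hcf2
  · rintro ⟨⟨hFS, hvF⟩, hcf⟩
    rw [Finset.insert_eq, ← Finset.union_assoc] at hcf
    have hcf2 : F ∪ {v} ∪ Λ ∈ cliqueFreeComplex (whiskerGraph G W t) t := hcf
    exact ⟨⟨hFS, cf_mono hcf2 (Finset.union_subset_union Finset.subset_union_left
      subset_rfl)⟩, hvF, Finset.union_subset hFS (Finset.singleton_subset_iff.2 hv), hcf2⟩

lemma prune_eq {S Λ : Finset (V ⊕ Fin p × Fin (t-1))} {u : V ⊕ Fin p × Fin (t-1)}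
    (hu : insert u Λ ∉ cliqueFreeComplex (whiskerGraph G W t) t) :
    EC G W t S Λ = EC G W t (S.erase u) Λ := by
  ext F
  simp only [EC, Set.mem_setOf_eq, Finset.subset_erase]
  refine ⟨fun ⟨hFS, hFcf⟩ => ⟨⟨hFS, fun huF => hu (cf_mono hFcf ?_)⟩, hFcf⟩,
    fun ⟨hFS, hFcf⟩ => ⟨hFS.1, hFcf⟩⟩
  exact Finset.insert_subset (Finset.mem_union_left _ huF) Finset.subset_union_right

lemma ec_simplex {S Λ : Finset (V ⊕ Fin p × Fin (t-1))}
    (hSΛ : S ∪ Λ ∈ cliqueFreeComplex (whiskerGraph G W t) t) :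
    EC G W t S Λ = {A | A ⊆ S} := by
  ext F
  simp only [EC, Set.mem_setOf_eq]
  exact ⟨fun h => h.1, fun h => ⟨h, cf_mono hSΛ (Finset.union_subset_union h subset_rfl)⟩⟩

lemma ec_empty {S Λ : Finset (V ⊕ Fin p × Fin (t-1))}
    (hΛ : Λ ∉ cliqueFreeComplex (whiskerGraph G W t) t) :
    EC G W t S Λ = ∅ := by
  ext F
  simp only [EC, Set.mem_setOf_eq, Set.mem_empty_iff_false, iff_false, not_and]
  exact fun _ hcf => hΛ (cf_mono hcf Finset.subset_union_right)

lemma whisker_face (hW : ∀ i, G.IsClique ↑(W i)) {Λ σ : Finset (V ⊕ Fin p × Fin (t-1))}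
    {i : Fin p} (hΛ : Λ ∈ cliqueFreeComplex (whiskerGraph G W t) t)
    (hσ : σ ⊆ whisk (V := V) p t i)
    (hcard : σ.card + (Λ ∩ partF W t i).card ≤ t - 1) :
    σ ∪ Λ ∈ cliqueFreeComplex (whiskerGraph G W t) t := by
  intro B hB hBcl
  by_cases hBσ : ∃ y ∈ B, y ∈ σ
  · obtain ⟨y, hyB, hyσ⟩ := hBσ
    obtain ⟨k, rfl⟩ := mem_whisk_shape (hσ hyσ)
    have hBpart : B ⊆ partF W t i := clique_subset_partF hBcl.isClique hyB
    have hsub : B ⊆ σ ∪ (Λ ∩ partF W t i) := by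
      intro z hz
      rcases Finset.mem_union.1 (hB hz) with h | h
      · exact Finset.mem_union_left _ h
      · exact Finset.mem_union_right _ (Finset.mem_inter.2 ⟨h, hBpart hz⟩)
    have h1 : B.card ≤ σ.card + (Λ ∩ partF W t i).card :=
      le_trans (Finset.card_le_card hsub) (Finset.card_union_le _ _)
    have h2 : B.card = t := hBcl.card_eq
    have h3 : 1 ≤ B.card := Finset.card_pos.2 ⟨_, hyB⟩
    omega
  · push_neg at hBσ
    refine hΛ B (fun z hz => ?_) hBcl
    rcases Finset.mem_union.1 (hB hz) with h | h
    · exact absurd h (hBσ z hz)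
    · exact h

lemma chain_link {S Λ σ' : Finset (V ⊕ Fin p × Fin (t-1))} {x : V ⊕ Fin p × Fin (t-1)}
    (hx : x ∈ σ') (hσ'S : σ' ⊆ S) :
    linkC (delC (EC G W t S Λ) σ') (σ'.erase x)
      = EC G W t (S \ σ') (Λ ∪ σ'.erase x) := by
  have hins : insert x (σ'.erase x) = σ' := Finset.insert_erase hx
  ext F
  simp only [linkC, delC, EC, Set.mem_setOf_eq]
  constructor
  · rintro ⟨⟨⟨hFS, hFcf⟩, hFσ'⟩, hdisjF, ⟨⟨hFσS, hFσcf⟩, hFσσ'⟩⟩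
    constructor
    · rw [Finset.subset_sdiff]
      refine ⟨hFS, Finset.disjoint_left.2 fun {z} hzF hzσ' => ?_⟩
      by_cases hzx : z = x
      · refine hFσσ' fun w hw => ?_
        by_cases hwx : w = x
        · exact Finset.mem_union_left _ ((hwx.trans hzx.symm) ▸ hzF)
        · exact Finset.mem_union_right _ (Finset.mem_erase.2 ⟨hwx, hw⟩)
      · exact Finset.disjoint_left.1 hdisjF hzF (Finset.mem_erase.2 ⟨hzx, hzσ'⟩)
    · rwa [Finset.union_comm Λ _, ← Finset.union_assoc]
  · rintro ⟨hFS', hFcf'⟩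
    rw [Finset.subset_sdiff] at hFS'
    have hxF : x ∉ F := fun h => Finset.disjoint_left.1 hFS'.2 h hx
    have hcfσ : F ∪ σ'.erase x ∪ Λ ∈ cliqueFreeComplex (whiskerGraph G W t) t := by
      rwa [Finset.union_comm Λ _, ← Finset.union_assoc] at hFcf'
    refine ⟨⟨⟨hFS'.1, cf_mono hcfσ (Finset.union_subset_union
        Finset.subset_union_left subset_rfl)⟩,
      fun h => hxF (h hx)⟩,
      Finset.disjoint_of_subset_right (Finset.erase_subset _ _) hFS'.2, ⟨⟨?_, hcfσ⟩, ?_⟩⟩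
    · exact Finset.union_subset hFS'.1 ((Finset.erase_subset _ _).trans hσ'S)
    · intro h
      rcases Finset.mem_union.1 (h hx) with h' | h'
      · exact hxF h'
      · exact absurd h' (Finset.notMem_erase _ _)

lemma delC_delC {α : Type*} [DecidableEq α] {Δ : Set (Finset α)} {σ σ' : Finset α}
    (h : σ ⊆ σ') : delC (delC Δ σ') σ = delC Δ σ := by
  ext F
  exact ⟨fun ⟨⟨h1, _⟩, h3⟩ => ⟨h1, h3⟩, fun ⟨h1, h2⟩ => ⟨⟨h1, fun hs => h2 (h.trans hs)⟩, h2⟩⟩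

lemma chain_lemma (hW : ∀ i, G.IsClique ↑(W i)) (ht : 2 ≤ t)
    {S Λ : Finset (V ⊕ Fin p × Fin (t-1))} {i : Fin p}
    (hdisj : Disjoint S Λ)
    (hΛ : Λ ∈ cliqueFreeComplex (whiskerGraph G W t) t)
    (hslack : t - 1 - (Λ ∩ partF W t i).card < (S ∩ whisk (V := V) p t i).card)
    (hinv : ∀ j, t - 1 - (Λ ∩ partF W t j).card ≤ (S ∩ whisk (V := V) p t j).card)
    (IH : ∀ S' Λ' : Finset (V ⊕ Fin p × Fin (t-1)), S'.card < S.card → Disjoint S' Λ' →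
      (∀ j, t - 1 - (Λ' ∩ partF W t j).card ≤ (S' ∩ whisk (V := V) p t j).card) →
      KDecomposable (t-2) (EC G W t S' Λ')) :
    ∀ r, r ≤ t - 1 - (Λ ∩ partF W t i).card →
      ∀ σ' ⊆ S ∩ whisk (V := V) p t i, σ'.card = r + 1 →
      KDecomposable (t-2) (delC (EC G W t S Λ) σ') := by
  intro r
  induction r with
  | zero =>
    intro _ σ' hσ'sub hσ'card
    obtain ⟨x, rfl⟩ := Finset.card_eq_one.1 hσ'card
    have hxm := Finset.mem_inter.1 (hσ'sub (Finset.mem_singleton_self x))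
    rw [delC_singleton]
    refine IH _ _ (Finset.card_erase_lt_of_mem hxm.1)
      (Finset.disjoint_of_subset_left (Finset.erase_subset _ _) hdisj) fun j => ?_
    by_cases hji : j = i
    · subst hji
      have : (S.erase x) ∩ whisk (V := V) p t j = (S ∩ whisk (V := V) p t j).erase x := by
        ext z
        simp only [Finset.mem_inter, Finset.mem_erase]
        tauto
      rw [this, Finset.card_erase_of_mem (Finset.mem_inter.2 hxm)]
      omega
    · rw [erase_inter_eq (not_mem_whisk_of_whisk hxm.2 hji)]
      exact hinv j
  | succ r ih =>
    intro hr σ' hσ'sub hσ'card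
    obtain ⟨x, hx⟩ := Finset.card_pos.1 (by omega : 0 < σ'.card)
    have hins : insert x (σ'.erase x) = σ' := Finset.insert_erase hx
    have hσcard : (σ'.erase x).card = r + 1 := by
      rw [Finset.card_erase_of_mem hx, hσ'card]
      omega
    have hσsub : σ'.erase x ⊆ S ∩ whisk (V := V) p t i :=
      (Finset.erase_subset _ _).trans hσ'sub
    have hσS : σ'.erase x ⊆ S := hσsub.trans Finset.inter_subset_left
    have hσw : σ'.erase x ⊆ whisk (V := V) p t i := hσsub.trans Finset.inter_subset_right
    have hΛp : (Λ ∩ partF W t i).card ≤ t - 1 := by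
      have := card_partF_le (G := G) hW (i := i) hΛ
      calc (Λ ∩ partF W t i).card ≤ ((Λ ∪ Λ) ∩ partF W t i).card := by
            rw [Finset.union_self]
          _ ≤ t - 1 := by rw [Finset.union_self]; exact card_partF_le hW hΛ
    have hxS : x ∈ S := (Finset.mem_inter.1 (hσ'sub hx)).1
    have hxw : x ∈ whisk (V := V) p t i := (Finset.mem_inter.1 (hσ'sub hx)).2
    refine KDecomposable.of_shedding (σ'.erase x) ⟨⟨⟨hσS, ?_⟩, ?_⟩, ?_⟩ ?_ ?_ ?_
    · -- σ'.erase x is a face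
      exact whisker_face hW hΛ hσw (by omega)
    · -- σ' ⊄ σ'.erase x
      exact fun h => Finset.notMem_erase x σ' (h hx)
    · -- shedding condition
      rintro τ ⟨⟨hτS, hτΛ⟩, hτσ'⟩ hστ v hv
      have hxτ : x ∉ τ := fun hxτ => hτσ' (hins ▸ Finset.insert_subset hxτ hστ)
      have hvw : v ∈ whisk (V := V) p t i := hσw hv
      have hvS : v ∈ S := hσS hv
      refine ⟨x, hxτ, ⟨⟨?_, ?_⟩, ?_⟩⟩
      · exact (Finset.erase_subset _ _).trans (Finset.insert_subset hxS hτS)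
      · refine swap_lemma hW hτΛ (hστ hv) (Finset.disjoint_left.1 hdisj hvS)
          (whisk_subset_partF hvw) hxw ?_
        intro hmem
        rcases Finset.mem_union.1 hmem with h | h
        · exact hxτ h
        · exact Finset.disjoint_left.1 hdisj hxS h
      · intro h
        exact Finset.notMem_erase v _ (h (Finset.mem_of_mem_erase hv))
    · -- dimension bound
      rw [hσcard]; omega
    · -- deletion
      rw [delC_delC (Finset.erase_subset _ _)]
      exact ih (by omega) (σ'.erase x) hσsub hσcard
    · -- link
      rw [chain_link hx (hσ'sub.trans Finset.inter_subset_left)]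
      have hσ'S : σ' ⊆ S := hσ'sub.trans Finset.inter_subset_left
      have hcard1 : (S \ σ').card < S.card :=
        Finset.card_lt_card (Finset.sdiff_ssubset hσ'S ⟨x, hx⟩)
      refine IH _ _ hcard1 ?_ fun j => ?_
      · rw [Finset.disjoint_union_right]
        exact ⟨Finset.disjoint_of_subset_left Finset.sdiff_subset hdisj,
          Finset.disjoint_of_subset_right (Finset.erase_subset _ _) Finset.sdiff_disjoint⟩
      · by_cases hji : j = i
        · subst hji
          have he1 : (Λ ∪ σ'.erase x) ∩ partF W t j
              = (Λ ∩ partF W t j) ∪ σ'.erase x := by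
            ext z
            simp only [Finset.mem_inter, Finset.mem_union]
            constructor
            · rintro ⟨h1 | h1, h2⟩
              · exact Or.inl ⟨h1, h2⟩
              · exact Or.inr h1
            · rintro (⟨h1, h2⟩ | h1)
              · exact ⟨Or.inl h1, h2⟩
              · exact ⟨Or.inr h1, whisk_subset_partF (hσw h1)⟩
          have he2 : (S \ σ') ∩ whisk (V := V) p t j
              = (S ∩ whisk (V := V) p t j) \ σ' := by
            ext z
            simp only [Finset.mem_inter, Finset.mem_sdiff]
            tauto
          have hd1 : Disjoint (Λ ∩ partF W t j) (σ'.erase x) :=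
            Finset.disjoint_of_subset_right hσS
              (Finset.disjoint_of_subset_left Finset.inter_subset_left hdisj.symm)
          rw [he1, he2, Finset.card_union_of_disjoint hd1,
            Finset.card_sdiff_of_subset hσ'sub, hσcard, hσ'card]
          have := Finset.card_le_card hσ'sub
          omega
        · have he1 : (Λ ∪ σ'.erase x) ∩ partF W t j = Λ ∩ partF W t j := by
            ext z
            simp only [Finset.mem_inter, Finset.mem_union]
            constructor
            · rintro ⟨h1 | h1, h2⟩
              · exact ⟨h1, h2⟩
              · exact absurd h2 (not_mem_partF_of_whisk (hσw h1) hji)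
            · rintro ⟨h1, h2⟩
              exact ⟨Or.inl h1, h2⟩
          have he2 : (S \ σ') ∩ whisk (V := V) p t j = S ∩ whisk (V := V) p t j := by
            ext z
            simp only [Finset.mem_inter, Finset.mem_sdiff]
            constructor
            · rintro ⟨⟨h1, -⟩, h2⟩
              exact ⟨h1, h2⟩
            · rintro ⟨h1, h2⟩
              refine ⟨⟨h1, fun hzσ' => ?_⟩, h2⟩
              exact not_mem_whisk_of_whisk ((Finset.mem_inter.1 (hσ'sub hzσ')).2) hji h2
          rw [he1, he2]
          exact hinv j

lemma main_lemma (hW : ∀ i, G.IsClique ↑(W i)) (hcov : ∀ v : V, ∃ i, v ∈ W i)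
    (ht : 2 ≤ t) :
    ∀ (n : ℕ) (S Λ : Finset (V ⊕ Fin p × Fin (t-1))), S.card ≤ n → Disjoint S Λ →
      (∀ j, t - 1 - (Λ ∩ partF W t j).card ≤ (S ∩ whisk (V := V) p t j).card) →
      KDecomposable (t-2) (EC G W t S Λ) := by
  intro n
  induction n with
  | zero =>
    intro S Λ hcard hdisj hinv
    have hS : S = ∅ := Finset.card_eq_zero.1 (le_antisymm hcard (Nat.zero_le _))
    by_cases hΛ : Λ ∈ cliqueFreeComplex (whiskerGraph G W t) t
    · refine KDecomposable.of_simplex (Or.inr ⟨S, ec_simplex ?_⟩)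
      rw [hS, Finset.empty_union]
      exact hΛ
    · exact KDecomposable.of_simplex (Or.inl (ec_empty hΛ))
  | succ n ihn =>
    intro S Λ hcard hdisj hinv
    by_cases hΛ : Λ ∈ cliqueFreeComplex (whiskerGraph G W t) t
    swap
    · exact KDecomposable.of_simplex (Or.inl (ec_empty hΛ))
    by_cases hSΛ : S ∪ Λ ∈ cliqueFreeComplex (whiskerGraph G W t) t
    · exact KDecomposable.of_simplex (Or.inr ⟨S, ec_simplex hSΛ⟩)
    by_cases hpr : ∃ u ∈ S, insert u Λ ∉ cliqueFreeComplex (whiskerGraph G W t) t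
    · -- prune a vertex that cannot belong to any face
      obtain ⟨u, huS, hu⟩ := hpr
      rw [prune_eq hu]
      refine ihn _ _ ?_ (Finset.disjoint_of_subset_left (Finset.erase_subset _ _) hdisj)
        fun j => ?_
      · have := Finset.card_erase_of_mem huS
        omega
      · by_cases huw : u ∈ whisk (V := V) p t j
        · -- the whisker cap of part j is already exhausted by Λ
          have hLam : t - 1 ≤ (Λ ∩ partF W t j).card := by
            rw [cliqueFreeComplex, Set.mem_setOf_eq] at hu
            push_neg at hu
            obtain ⟨B, hB, hBcl⟩ := hu
            have huB : u ∈ B := by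
              by_contra huB
              refine hΛ B (fun z hz => ?_) hBcl
              rcases Finset.mem_insert.1 (hB hz) with rfl | h
              · exact absurd hz huB
              · exact h
            obtain ⟨k, rfl⟩ := mem_whisk_shape huw
            have hBpart : B ⊆ partF W t j := clique_subset_partF hBcl.isClique huB
            have hsub : B.erase (Sum.inr (j, k)) ⊆ Λ ∩ partF W t j := by
              intro z hz
              obtain ⟨hz1, hz2⟩ := Finset.mem_erase.1 hz
              rcases Finset.mem_insert.1 (hB hz2) with h | h
              · exact absurd h hz1
              · exact Finset.mem_inter.2 ⟨h, hBpart hz2⟩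
            have := Finset.card_le_card hsub
            rw [Finset.card_erase_of_mem huB, hBcl.card_eq] at this
            omega
          omega
        · rw [erase_inter_eq huw]
          exact hinv j
    push_neg at hpr
    by_cases hsl : ∃ i, t - 1 - (Λ ∩ partF W t i).card < (S ∩ whisk (V := V) p t i).card
    · -- some part has slack : run the whisker chain
      obtain ⟨i, hslack⟩ := hsl
      have IH' : ∀ S' Λ' : Finset (V ⊕ Fin p × Fin (t-1)), S'.card < S.card →
          Disjoint S' Λ' →
          (∀ j, t - 1 - (Λ' ∩ partF W t j).card ≤ (S' ∩ whisk (V := V) p t j).card) →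
          KDecomposable (t-2) (EC G W t S' Λ') :=
        fun S' Λ' hc hd hi => ihn S' Λ' (by omega) hd hi
      obtain ⟨σ', hσ'sub, hσ'card⟩ := Finset.exists_subset_card_eq
        (show (t - 1 - (Λ ∩ partF W t i).card) + 1 ≤ (S ∩ whisk (V := V) p t i).card by
          omega)
      have hchain := chain_lemma hW ht hdisj hΛ hslack hinv IH'
        (t - 1 - (Λ ∩ partF W t i).card) le_rfl σ' hσ'sub hσ'card
      have heq : delC (EC G W t S Λ) σ' = EC G W t S Λ := by
        ext F
        refine ⟨fun h => h.1, fun hF => ⟨hF, fun hσ'F => ?_⟩⟩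
        have hσ'w : σ' ⊆ whisk (V := V) p t i := hσ'sub.trans Finset.inter_subset_right
        have h1 : σ' ∪ (Λ ∩ partF W t i) ⊆ (F ∪ Λ) ∩ partF W t i := by
          intro z hz
          rcases Finset.mem_union.1 hz with h | h
          · exact Finset.mem_inter.2 ⟨Finset.mem_union_left _ (hσ'F h),
              whisk_subset_partF (hσ'w h)⟩
          · exact Finset.mem_inter.2 ⟨Finset.mem_union_right _ (Finset.mem_inter.1 h).1,
              (Finset.mem_inter.1 h).2⟩
        have hd : Disjoint σ' (Λ ∩ partF W t i) :=
          Finset.disjoint_of_subset_right Finset.inter_subset_left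
            (Finset.disjoint_of_subset_left (hσ'sub.trans Finset.inter_subset_left) hdisj)
        have h2 := Finset.card_le_card h1
        rw [Finset.card_union_of_disjoint hd] at h2
        have h3 : ((F ∪ Λ) ∩ partF W t i).card ≤ t - 1 := card_partF_le hW hF.2
        have h4 : (Λ ∩ partF W t i).card ≤ t - 1 := by
          have h5 : Λ ∩ partF W t i ⊆ (F ∪ Λ) ∩ partF W t i := fun z hz =>
            Finset.mem_inter.2 ⟨Finset.mem_union_right _ (Finset.mem_inter.1 hz).1,
              (Finset.mem_inter.1 hz).2⟩
          exact le_trans (Finset.card_le_card h5) h3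
        omega
      rw [← heq]
      exact hchain
    · -- no slack : find a shedding vertex coming from V
      push_neg at hsl
      rw [cliqueFreeComplex, Set.mem_setOf_eq] at hSΛ
      push_neg at hSΛ
      obtain ⟨B, hBsub, hBcl⟩ := hSΛ
      have hBΛ : ∃ u ∈ B, u ∉ Λ := by
        by_contra h
        push_neg at h
        exact hΛ B h hBcl
      obtain ⟨u, huB, huΛ⟩ := hBΛ
      have huS : u ∈ S := by
        rcases Finset.mem_union.1 (hBsub huB) with h | h
        · exact h
        · exact absurd h huΛ
      have key : ∃ a i, a ∈ W i ∧ Sum.inl a ∈ S := by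
        match u, huB, huΛ, huS with
        | Sum.inl a, huB, huΛ, huS =>
          obtain ⟨i, hi⟩ := hcov a
          exact ⟨a, i, hi, huS⟩
        | Sum.inr ⟨i, k⟩, huB, huΛ, huS =>
          have hBpart : B ⊆ partF W t i := clique_subset_partF hBcl.isClique huB
          have hsub3 : B ⊆ ((W i).image Sum.inl ∩ S)
              ∪ ((S ∩ whisk (V := V) p t i) ∪ (Λ ∩ partF W t i)) := by
            intro z hz
            have hzp := hBpart hz
            rcases Finset.mem_union.1 (hBsub hz) with hzS | hzΛ
            · match z, hzp, hzS with
              | Sum.inl a, hzp, hzS =>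
                refine Finset.mem_union_left _ (Finset.mem_inter.2 ⟨?_, hzS⟩)
                exact Finset.mem_image.2 ⟨a, by simpa using hzp, rfl⟩
              | Sum.inr ⟨j, l⟩, hzp, hzS =>
                have : j = i := by simpa using hzp
                subst this
                exact Finset.mem_union_right _ (Finset.mem_union_left _
                  (Finset.mem_inter.2 ⟨hzS, by simp⟩))
            · exact Finset.mem_union_right _ (Finset.mem_union_right _
                (Finset.mem_inter.2 ⟨hzΛ, hzp⟩))
          have hc1 := Finset.card_le_card hsub3
          have hc2 := Finset.card_union_le ((W i).image Sum.inl ∩ S)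
            ((S ∩ whisk (V := V) p t i) ∪ (Λ ∩ partF W t i))
          have hc3 := Finset.card_union_le (S ∩ whisk (V := V) p t i) (Λ ∩ partF W t i)
          have hc4 := hsl i
          have hc5 : (Λ ∩ partF W t i).card ≤ t - 1 := by
            calc (Λ ∩ partF W t i).card ≤ ((Λ ∪ Λ) ∩ partF W t i).card := by
                  rw [Finset.union_self]
              _ ≤ t - 1 := by rw [Finset.union_self]; exact card_partF_le hW hΛ
          have hc6 : B.card = t := hBcl.card_eq
          have hpos : 0 < ((W i).image Sum.inl ∩ S).card := by omega
          obtain ⟨z, hz⟩ := Finset.card_pos.1 hpos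
          obtain ⟨hz1, hz2⟩ := Finset.mem_inter.1 hz
          obtain ⟨a, ha, rfl⟩ := Finset.mem_image.1 hz1
          exact ⟨a, i, ha, hz2⟩
      obtain ⟨a, i, haW, haS⟩ := key
      refine KDecomposable.of_shedding {Sum.inl a} ⟨⟨Finset.singleton_subset_iff.2 haS, ?_⟩,
        ?_⟩ ?_ ?_ ?_
      · rw [show ({Sum.inl a} : Finset (V ⊕ Fin p × Fin (t-1))) ∪ Λ = insert (Sum.inl a) Λ
          from (Finset.insert_eq _ _).symm]
        exact hpr _ haS
      · -- the shedding condition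
        rintro τ ⟨hτS, hτΛ⟩ hστ v hv
        rw [Finset.mem_singleton] at hv
        subst hv
        have hvτ : Sum.inl a ∈ τ := hστ (Finset.mem_singleton_self _)
        obtain ⟨x, hxSw, hxτΛ⟩ := avail_lemma hW hdisj (hinv i) hτS hτΛ hvτ
          (mem_partF_inl.2 haW) (by simp)
        obtain ⟨hxS, hxw⟩ := Finset.mem_inter.1 hxSw
        refine ⟨x, fun h => hxτΛ (Finset.mem_union_left _ h), ⟨?_, ?_⟩⟩
        · exact (Finset.erase_subset _ _).trans (Finset.insert_subset hxS hτS)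
        · exact swap_lemma hW hτΛ hvτ (Finset.disjoint_left.1 hdisj haS)
            (mem_partF_inl.2 haW) hxw hxτΛ
      · rw [Finset.card_singleton]
        omega
      · rw [delC_singleton]
        refine ihn _ _ ?_
          (Finset.disjoint_of_subset_left (Finset.erase_subset _ _) hdisj) fun j => ?_
        · have := Finset.card_erase_of_mem haS
          omega
        · rw [erase_inter_eq (by simp : (Sum.inl a : V ⊕ Fin p × Fin (t-1)) ∉ whisk (V := V) p t j)]
          exact hinv j
      · rw [link_vertex haS]
        refine ihn _ _ ?_ ?_ fun j => ?_
        · have := Finset.card_erase_of_mem haS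
          omega
        · rw [Finset.disjoint_insert_right]
          exact ⟨Finset.notMem_erase _ _,
            Finset.disjoint_of_subset_left (Finset.erase_subset _ _) hdisj⟩
        · rw [erase_inter_eq (by simp : (Sum.inl a : V ⊕ Fin p × Fin (t-1)) ∉ whisk (V := V) p t j)]
          refine le_trans (Nat.sub_le_sub_left (Finset.card_le_card
            (Finset.inter_subset_inter (Finset.subset_insert _ _) subset_rfl)) _) (hinv j)

end Whisker

/-- `CF_t(G(Π, t))` is `(t-2)`-decomposable; in particular it is
shellable. -/
theorem statement15 {V : Type*} [Fintype V] [DecidableEq V]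
    (G : SimpleGraph V) (p : ℕ) (W : Fin p → Finset V)
    (hPi : IsCliqueVertexPartition G W) (t : ℕ) (ht : 2 ≤ t) :
    KDecomposable (t - 2) (cliqueFreeComplex (whiskerGraph G W t) t) ∧
    IsShellable (cliqueFreeComplex (whiskerGraph G W t) t) := by
  have heq : EC G W t Finset.univ ∅ = cliqueFreeComplex (whiskerGraph G W t) t := by
    ext F
    simp only [EC, Set.mem_setOf_eq, Finset.subset_univ, true_and, Finset.union_empty]
  have hinv : ∀ j, t - 1 - ((∅ : Finset (V ⊕ Fin p × Fin (t-1))) ∩ partF W t j).card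
      ≤ ((Finset.univ : Finset (V ⊕ Fin p × Fin (t-1))) ∩ whisk (V := V) p t j).card := by
    intro j
    rw [Finset.empty_inter, Finset.card_empty, Finset.univ_inter, whisk_card]
    omega
  have hk : KDecomposable (t-2) (cliqueFreeComplex (whiskerGraph G W t) t) := by
    rw [← heq]
    exact main_lemma hPi.clique hPi.cover ht _ _ _ le_rfl
      (Finset.disjoint_empty_right _) hinv
  exact ⟨hk, shellable_of_kdec hk cf_dclosed⟩
end

section
/- Let G be a finite simple chordal graph and let t ≥ 2 be an integer. Then the t-clique clutter CH_t(G) is a chordal clutter: either CH_t(G) has no edges, or it admits a simplicial maximal subedge e such that the deletion CH_t(G) ∖ e is again a chordal clutter (and this recursion terminates in a clutter with no edges). -/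
/-- A chordal graph: no induced cycle of length at least 4. -/
def IsChordalGraph {V : Type*} (G : SimpleGraph V) : Prop :=
  ∀ n, 4 ≤ n → ¬ ∃ f : Fin n ↪ V,
    ∀ i j, G.Adj (f i) (f j) ↔ (SimpleGraph.cycleGraph n).Adj i j

/-- `t`-diamond-free: no two distinct `t`-cliques intersecting in `t - 1` vertices. -/
def TDiamondFree {V : Type*} [DecidableEq V] (G : SimpleGraph V) (t : ℕ) : Prop :=
  ¬ ∃ A B : Finset V, G.IsNClique t A ∧ G.IsNClique t B ∧ A ≠ B ∧ (A ∩ B).card = t - 1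

/-- The `t`-clique clutter of a graph: edges are the `t`-cliques of `G`. -/
def tCliqueClutter {V : Type*} (G : SimpleGraph V) (t : ℕ) : Set (Finset V) :=
  {e : Finset V | G.IsNClique t e}

/-- The closed neighborhood `N_C[e]` of a `(t-1)`-subset `e` in a `t`-uniform
clutter `C`. -/
def clutterNbhd {V : Type*} [DecidableEq V] (C : Set (Finset V)) (e : Finset V) :
    Set V :=
  ↑e ∪ {v | insert v e ∈ C}

/-- The deletion `C ∖ e`: the edges of `C` not containing `e`. -/
def clutterDel {V : Type*} (C : Set (Finset V)) (e : Finset V) : Set (Finset V) :=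
  {F | F ∈ C ∧ ¬ e ⊆ F}

/-- A chordal `t`-uniform clutter: either there are no edges, or there is a
simplicial maximal subedge `e` (a `(t-1)`-set properly contained in some edge, all
`t`-subsets of whose closed neighborhood are edges) such that `C ∖ e` is again
chordal; the inductive definition forces the recursion to terminate in a clutter
with no edges. -/
inductive ChordalClutter {V : Type*} [DecidableEq V] (t : ℕ) : Set (Finset V) → Prop
  | no_edges {C : Set (Finset V)} (h : C = ∅) : ChordalClutter t C
  | step {C : Set (Finset V)} (e : Finset V)
      (hcard : e.card = t - 1)
      (hmaximal : ∃ v, v ∉ e ∧ insert v e ∈ C)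
      (hsimplicial : ∀ F : Finset V, F.card = t → (↑F : Set V) ⊆ clutterNbhd C e →
        F ∈ C)
      (hrec : ChordalClutter t (clutterDel C e)) : ChordalClutter t C


-- ===== auxiliary development =====

section Prelim

lemma sum_two_pow_lt {I : Finset ℕ} {k : ℕ} (h : ∀ i ∈ I, i < k) :
    ∑ i ∈ I, 2 ^ i < 2 ^ k := by
  have h1 : ∑ i ∈ I, 2 ^ i ≤ ∑ i ∈ Finset.range k, 2 ^ i := by
    apply Finset.sum_le_sum_of_subset
    intro i hi
    exact Finset.mem_range.mpr (h i hi)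
  have h2 : ∀ k : ℕ, ∑ i ∈ Finset.range k, 2 ^ i < 2 ^ k := by
    intro k
    induction k with
    | zero => simp
    | succ n ih =>
      rw [Finset.sum_range_succ, pow_succ]
      omega
  exact lt_of_le_of_lt h1 (h2 k)

variable {V : Type*} [DecidableEq V] [Fintype V]

/-- binary encoding of a finset -/
def nuEnc (ord : V → ℕ) (A : Finset V) : ℕ := ∑ x ∈ A, 2 ^ (ord x)

lemma nuEnc_lt (ord : V → ℕ) (hord : Function.Injective ord) {A B : Finset V} {m : V}
    (hmB : m ∈ B) (hmA : m ∉ A) (hmax : ∀ x ∈ A, x ∉ B → ord x < ord m) :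
    nuEnc ord A < nuEnc ord B := by
  classical
  have hsplitA : nuEnc ord A = nuEnc ord (A ∩ B) + nuEnc ord (A \ B) := by
    rw [nuEnc, nuEnc, nuEnc,
      ← Finset.sum_union (Finset.disjoint_sdiff_inter A B).symm]
    apply Finset.sum_congr _ (fun _ _ => rfl)
    rw [Finset.union_comm, Finset.sdiff_union_inter]
  have hAB : nuEnc ord (A \ B) < 2 ^ ord m := by
    have heq : nuEnc ord (A \ B) = ∑ i ∈ (A \ B).image ord, 2 ^ i := by
      rw [Finset.sum_image (fun x _ y _ h => hord h)]
      rfl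
    rw [heq]
    apply sum_two_pow_lt
    intro i hi
    obtain ⟨x, hx, rfl⟩ := Finset.mem_image.mp hi
    exact hmax x (Finset.mem_sdiff.mp hx).1 (Finset.mem_sdiff.mp hx).2
  have hsub : insert m (A ∩ B) ⊆ B := by
    intro x hx
    rcases Finset.mem_insert.mp hx with rfl | hx
    · exact hmB
    · exact (Finset.mem_inter.mp hx).2
  have hBge : 2 ^ ord m + nuEnc ord (A ∩ B) ≤ nuEnc ord B := by
    have : nuEnc ord (insert m (A ∩ B)) = 2 ^ ord m + nuEnc ord (A ∩ B) := by
      rw [nuEnc, Finset.sum_insert (fun h => hmA (Finset.mem_inter.mp h).1)]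
      rfl
    rw [← this]
    exact Finset.sum_le_sum_of_subset hsub
  omega

lemma nuEnc_colex (ord : V → ℕ) (hord : Function.Injective ord) {A B : Finset V}
    (hne : A ≠ B) (hlt : nuEnc ord A < nuEnc ord B) :
    ∃ m, m ∈ B ∧ m ∉ A ∧ (∀ x, (x ∈ A ∧ x ∉ B) ∨ (x ∈ B ∧ x ∉ A) → ord x ≤ ord m) := by
  classical
  have hΔne : ((A \ B) ∪ (B \ A)).Nonempty := by
    by_contra h
    rw [Finset.not_nonempty_iff_eq_empty, Finset.union_eq_empty, Finset.sdiff_eq_empty_iff_subset,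
      Finset.sdiff_eq_empty_iff_subset] at h
    exact hne (Finset.Subset.antisymm h.1 h.2)
  obtain ⟨m, hm, hmax⟩ := Finset.exists_max_image _ ord hΔne
  have hmax' : ∀ x, (x ∈ A ∧ x ∉ B) ∨ (x ∈ B ∧ x ∉ A) → ord x ≤ ord m := by
    intro x hx
    apply hmax
    rcases hx with ⟨h1, h2⟩ | ⟨h1, h2⟩
    · exact Finset.mem_union_left _ (Finset.mem_sdiff.mpr ⟨h1, h2⟩)
    · exact Finset.mem_union_right _ (Finset.mem_sdiff.mpr ⟨h1, h2⟩)
  rcases Finset.mem_union.mp hm with hm' | hm'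
  · -- m ∈ A \ B : then ν B < ν A, contradiction
    exfalso
    rw [Finset.mem_sdiff] at hm'
    have : nuEnc ord B < nuEnc ord A := by
      apply nuEnc_lt ord hord hm'.1 hm'.2
      intro x hxB hxA
      have := hmax' x (Or.inr ⟨hxB, hxA⟩)
      rcases lt_or_eq_of_le this with h | h
      · exact h
      · exact absurd (hord h) (by rintro rfl; exact hxA hm'.1)
    omega
  · rw [Finset.mem_sdiff] at hm'
    exact ⟨m, hm'.1, hm'.2, hmax'⟩

lemma nuEnc_inj (ord : V → ℕ) (hord : Function.Injective ord) {A B : Finset V}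
    (hne : A ≠ B) : nuEnc ord A ≠ nuEnc ord B := by
  classical
  intro heq
  have hΔne : ((A \ B) ∪ (B \ A)).Nonempty := by
    by_contra h
    rw [Finset.not_nonempty_iff_eq_empty, Finset.union_eq_empty, Finset.sdiff_eq_empty_iff_subset,
      Finset.sdiff_eq_empty_iff_subset] at h
    exact hne (Finset.Subset.antisymm h.1 h.2)
  obtain ⟨m, hm, hmax⟩ := Finset.exists_max_image _ ord hΔne
  have key : ∀ {X Y : Finset V}, m ∈ X → m ∉ Y →
      ((X \ Y) ∪ (Y \ X) = (A \ B) ∪ (B \ A)) → nuEnc ord Y < nuEnc ord X := by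
    intro X Y hmX hmY hXY
    apply nuEnc_lt ord hord hmX hmY
    intro x hxY hxX
    have hx : x ∈ (A \ B) ∪ (B \ A) := by
      rw [← hXY]
      exact Finset.mem_union_right _ (Finset.mem_sdiff.mpr ⟨hxY, hxX⟩)
    rcases lt_or_eq_of_le (hmax x hx) with h | h
    · exact h
    · exact absurd (hord h) (by rintro rfl; exact hxX hmX)
  rcases Finset.mem_union.mp hm with hm' | hm' <;> rw [Finset.mem_sdiff] at hm'
  · exact absurd heq (Nat.ne_of_gt (key hm'.1 hm'.2 rfl))
  · exact absurd heq (Nat.ne_of_lt (key hm'.1 hm'.2 (Finset.union_comm _ _)))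

end Prelim


section GraphUtil

variable {V : Type*}

/-- restriction of a graph to a set of vertices -/
def rg (G : SimpleGraph V) (u : Set V) : SimpleGraph V where
  Adj x y := x ∈ u ∧ y ∈ u ∧ G.Adj x y
  symm := ⟨fun x y h => ⟨h.2.1, h.1, h.2.2.symm⟩⟩
  loopless := ⟨fun x h => G.loopless.irrefl x h.2.2⟩

lemma walk_closed {H : SimpleGraph V} {P : V → Prop}
    (hP : ∀ x y, P x → H.Adj x y → P y) : ∀ {x y : V}, H.Walk x y → P x → P y := by
  intro x y w
  induction w with
  | nil => exact id
  | cons h p ih => exact fun hx => ih (hP _ _ hx h)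

lemma reach_closed {H : SimpleGraph V} {P : V → Prop}
    (hP : ∀ x y, P x → H.Adj x y → P y) {x y : V} (h : H.Reachable x y) (hx : P x) : P y := by
  obtain ⟨w⟩ := h
  exact walk_closed hP w hx

lemma walk_prefix {H : SimpleGraph V} :
    ∀ {x y : V} (w : H.Walk x y) (i : ℕ), ∃ w' : H.Walk x (w.getVert i), w'.length ≤ i := by
  intro x y w
  induction w with
  | nil => intro i; exact ⟨SimpleGraph.Walk.nil, by simp⟩
  | cons h p ih =>
    intro i
    match i with
    | 0 => exact ⟨SimpleGraph.Walk.nil, Nat.le_refl _⟩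
    | (i+1) =>
      obtain ⟨w', hw'⟩ := ih i
      exact ⟨SimpleGraph.Walk.cons h w', by simp; omega⟩

lemma walk_suffix {H : SimpleGraph V} :
    ∀ {x y : V} (w : H.Walk x y) (i : ℕ),
      ∃ w' : H.Walk (w.getVert i) y, w'.length ≤ w.length - i := by
  intro x y w
  induction w with
  | nil => intro i; exact ⟨SimpleGraph.Walk.nil, by simp⟩
  | cons h p ih =>
    intro i
    match i with
    | 0 => exact ⟨SimpleGraph.Walk.cons h p, Nat.le_refl _⟩
    | (i+1) =>
      obtain ⟨w', hw'⟩ := ih i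
      exact ⟨w', by simp; omega⟩

lemma walk_vert_mem {G : SimpleGraph V} {u : Set V} :
    ∀ {x y : V} (w : (rg G u).Walk x y) (i : ℕ), w.getVert i = x ∨ w.getVert i ∈ u := by
  intro x y w
  induction w with
  | nil => intro i; left; rfl
  | cons h p ih =>
    intro i
    match i with
    | 0 => left; rfl
    | (i+1) =>
      rcases ih i with h' | h'
      · right; rw [SimpleGraph.Walk.getVert_cons_succ, h']; exact h.2.1
      · right; rw [SimpleGraph.Walk.getVert_cons_succ]; exact h'

lemma exists_min_walk {H : SimpleGraph V} {x y : V} (h : H.Reachable x y) :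
    ∃ w : H.Walk x y, ∀ w' : H.Walk x y, w.length ≤ w'.length := by
  classical
  obtain ⟨w0⟩ := h
  have hex : ∃ n, ∃ w : H.Walk x y, w.length = n := ⟨w0.length, w0, rfl⟩
  obtain ⟨w, hw⟩ := Nat.find_spec hex
  exact ⟨w, fun w' => hw ▸ Nat.find_min' hex ⟨w', rfl⟩⟩

lemma min_walk_chordfree {H : SimpleGraph V} {x y : V} {w : H.Walk x y}
    (hmin : ∀ w' : H.Walk x y, w.length ≤ w'.length) {i j : ℕ}
    (hij : i + 1 < j) (hj : j ≤ w.length) : ¬ H.Adj (w.getVert i) (w.getVert j) := by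
  intro hadj
  obtain ⟨w1, hw1⟩ := walk_prefix w i
  obtain ⟨w2, hw2⟩ := walk_suffix w j
  have := hmin (w1.append (SimpleGraph.Walk.cons hadj w2))
  rw [SimpleGraph.Walk.length_append, SimpleGraph.Walk.length_cons] at this
  omega

lemma min_walk_nodup {H : SimpleGraph V} {x y : V} {w : H.Walk x y}
    (hmin : ∀ w' : H.Walk x y, w.length ≤ w'.length) {i j : ℕ}
    (hij : i < j) (hj : j ≤ w.length) : w.getVert i ≠ w.getVert j := by
  intro heq
  obtain ⟨w1, hw1⟩ := walk_prefix w i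
  obtain ⟨w2, hw2⟩ := walk_suffix w j
  have := hmin (w1.append (w2.copy heq.symm rfl))
  rw [SimpleGraph.Walk.length_append, SimpleGraph.Walk.length_copy] at this
  omega

end GraphUtil


lemma chordal_sep {V : Type*} {G : SimpleGraph V}
    (hch : IsChordalGraph G) {A B : Set V} {x y : V}
    (hAB : ∀ a ∈ A, ∀ b ∈ B, ¬ G.Adj a b)
    (hABd : ∀ a ∈ A, a ∉ B)
    (hxA : x ∉ A) (hxB : x ∉ B) (hyA : y ∉ A) (hyB : y ∉ B)
    (hnadj : ¬ G.Adj x y) (hxy : x ≠ y)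
    (h1 : (rg G (A ∪ {x, y})).Reachable x y)
    (h2 : (rg G (B ∪ {x, y})).Reachable y x) : False := by
  obtain ⟨w1, hmin1⟩ := exists_min_walk h1
  obtain ⟨w2, hmin2⟩ := exists_min_walk h2
  set n1 := w1.length with hn1def
  set n2 := w2.length with hn2def
  set c1 : ℕ → V := w1.getVert with hc1def
  set c2 : ℕ → V := w2.getVert with hc2def
  have hc10 : c1 0 = x := w1.getVert_zero
  have hc1n : c1 n1 = y := w1.getVert_length
  have hc20 : c2 0 = y := w2.getVert_zero
  have hc2n : c2 n2 = x := w2.getVert_length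
  have hn1 : 2 ≤ n1 := by
    by_contra hcon
    have h01 : n1 = 0 ∨ n1 = 1 := by omega
    rcases h01 with h' | h'
    · exact hxy (SimpleGraph.Walk.eq_of_length_eq_zero (p := w1) (by omega))
    · have hadj := w1.adj_getVert_succ (by omega : 0 < w1.length)
      have e2 : c1 (0 + 1) = y := by
        simp only [Nat.zero_add]; rw [← h']; exact hc1n
      have e1 : c1 0 = x := hc10
      rw [show w1.getVert 0 = x from e1, show w1.getVert (0+1) = y from e2] at hadj
      exact hnadj hadj.2.2
  have hn2 : 2 ≤ n2 := by
    by_contra hcon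
    have h01 : n2 = 0 ∨ n2 = 1 := by omega
    rcases h01 with h' | h'
    · exact hxy.symm (SimpleGraph.Walk.eq_of_length_eq_zero (p := w2) (by omega))
    · have hadj := w2.adj_getVert_succ (by omega : 0 < w2.length)
      have e2 : c2 (0 + 1) = x := by
        simp only [Nat.zero_add]; rw [← h']; exact hc2n
      have e1 : c2 0 = y := hc20
      rw [show w2.getVert 0 = y from e1, show w2.getVert (0+1) = x from e2] at hadj
      exact hnadj hadj.2.2.symm
  -- membership facts
  have mem1 : ∀ i, c1 i ∈ A ∪ {x, y} := by
    intro i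
    rcases walk_vert_mem w1 i with h | h
    · rw [← hc1def] at h; rw [h]; right; left; rfl
    · rw [← hc1def] at h; exact h
  have mem2 : ∀ i, c2 i ∈ B ∪ {x, y} := by
    intro i
    rcases walk_vert_mem w2 i with h | h
    · rw [← hc2def] at h; rw [h]; right; right; rfl
    · rw [← hc2def] at h; exact h
  have int1 : ∀ i, 0 < i → i < n1 → c1 i ∈ A := by
    intro i h0 hi
    rcases mem1 i with h | h
    · exact h
    · exfalso
      rcases h with h | h
      · exact min_walk_nodup hmin1 h0 (le_of_lt hi) (show c1 0 = c1 i by rw [hc10, h])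
      · exact min_walk_nodup hmin1 hi le_rfl
          (show c1 i = c1 n1 by rw [hc1n]; rw [Set.mem_singleton_iff] at h; rw [h])
  have int2 : ∀ i, 0 < i → i < n2 → c2 i ∈ B := by
    intro i h0 hi
    rcases mem2 i with h | h
    · exact h
    · exfalso
      rcases h with h | h
      · exact min_walk_nodup hmin2 hi le_rfl
          (show c2 i = c2 n2 by rw [hc2n, h])
      · exact min_walk_nodup hmin2 h0 (le_of_lt hi)
          (show c2 0 = c2 i by rw [hc20]; rw [Set.mem_singleton_iff] at h; rw [h])
  have nonadj1 : ∀ i j, i + 1 < j → j ≤ n1 → ¬ G.Adj (c1 i) (c1 j) := by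
    intro i j hij hj hadj
    exact min_walk_chordfree hmin1 hij hj ⟨mem1 i, mem1 j, hadj⟩
  have nonadj2 : ∀ i j, i + 1 < j → j ≤ n2 → ¬ G.Adj (c2 i) (c2 j) := by
    intro i j hij hj hadj
    exact min_walk_chordfree hmin2 hij hj ⟨mem2 i, mem2 j, hadj⟩
  set N := n1 + n2 with hNdef
  set L : ℕ → V := fun k => if k < n1 then c1 k else c2 (k - n1) with hLdef
  have Lval1 : ∀ k, k ≤ n1 → L k = c1 k := by
    intro k hk
    rcases Nat.lt_or_ge k n1 with h | h
    · simp [hLdef, h]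
    · have : k = n1 := by omega
      subst this
      simp [hLdef, hc20, hc1n]
  have Lval2 : ∀ k, n1 ≤ k → L k = c2 (k - n1) := by
    intro k hk
    simp [hLdef, Nat.not_lt.mpr hk]
  have L0 : L 0 = x := by rw [Lval1 0 (by omega), hc10]
  -- steps
  have step : ∀ k, k + 1 < N → G.Adj (L k) (L (k + 1)) := by
    intro k hk
    rcases Nat.lt_or_ge k n1 with h | h
    · rw [Lval1 k (by omega), Lval1 (k+1) (by omega)]
      exact (w1.adj_getVert_succ h).2.2
    · rw [Lval2 k h, Lval2 (k+1) (by omega)]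
      have he : k + 1 - n1 = (k - n1) + 1 := by omega
      rw [he]
      exact (w2.adj_getVert_succ (by omega : k - n1 < w2.length)).2.2
  have wrap : G.Adj (L (N - 1)) (L 0) := by
    rw [Lval2 (N-1) (by omega), L0, ← hc2n]
    have he : N - 1 - n1 = n2 - 1 := by omega
    rw [he]
    have := (w2.adj_getVert_succ (by omega : n2 - 1 < w2.length)).2.2
    have he2 : n2 - 1 + 1 = n2 := by omega
    rw [he2] at this
    exact this
  -- injectivity
  have inj : ∀ i j, i < j → j < N → L i ≠ L j := by
    intro i j hij hj
    rcases le_or_gt j n1 with h | h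
    · rw [Lval1 i (by omega), Lval1 j h]
      exact min_walk_nodup hmin1 hij h
    · rcases le_or_gt n1 i with h' | h'
      · rw [Lval2 i h', Lval2 j (by omega)]
        exact min_walk_nodup hmin2 (by omega) (by omega)
      · -- i < n1 < j
        rw [Lval1 i (by omega), Lval2 j (by omega)]
        have hjB : c2 (j - n1) ∈ B := int2 _ (by omega) (by omega)
        rcases Nat.eq_zero_or_pos i with rfl | h0
        · rw [hc10]; intro he; exact hxB (he ▸ hjB)
        · have hiA : c1 i ∈ A := int1 i h0 h'
          intro he
          exact hABd _ hiA (he ▸ hjB)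
  -- non-adjacency
  have nonadj : ∀ i j, i ≤ j → j < N → i ≠ j → j ≠ i + 1 → ¬(i = 0 ∧ j = N - 1) →
      ¬ G.Adj (L i) (L j) := by
    intro i j hij hj hne hne1 hnwrap
    have hij2 : i + 2 ≤ j := by omega
    rcases le_or_gt j n1 with h | h
    · rw [Lval1 i (by omega), Lval1 j h]
      exact nonadj1 i j (by omega) h
    · rcases le_or_gt n1 i with h' | h'
      · rw [Lval2 i h', Lval2 j (by omega)]
        exact nonadj2 _ _ (by omega) (by omega)
      · rw [Lval1 i (by omega), Lval2 j (by omega)]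
        have hjB : c2 (j - n1) ∈ B := int2 _ (by omega) (by omega)
        rcases Nat.eq_zero_or_pos i with rfl | h0
        · rw [hc10, ← hc2n]
          intro hadj
          have hj' : j ≠ N - 1 := fun he => hnwrap ⟨rfl, he⟩
          exact nonadj2 (j - n1) n2 (by omega) le_rfl hadj.symm
        · have hiA : c1 i ∈ A := int1 i h0 h'
          exact hAB _ hiA _ hjB
  -- nat-level characterization
  have key : ∀ a b : ℕ, a < N → b < N →
      (G.Adj (L a) (L b) ↔ (b = a + 1 ∨ a = b + 1 ∨ (a = 0 ∧ b = N - 1) ∨ (b = 0 ∧ a = N - 1))) := by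
    intro a b ha hb
    constructor
    · intro hadj
      by_contra hC
      push_neg at hC
      obtain ⟨h1', h2', h3', h4'⟩ := hC
      have hab : a ≠ b := by rintro rfl; exact G.irrefl hadj
      rcases le_or_gt a b with h | h
      · exact nonadj a b h hb hab h1' (fun ⟨u, v⟩ => h3' u v) hadj
      · exact nonadj b a (le_of_lt h) ha (Ne.symm hab) h2' (fun ⟨u, v⟩ => h4' u v) hadj.symm
    · intro h
      rcases h with rfl | rfl | ⟨rfl, rfl⟩ | ⟨rfl, rfl⟩
      · exact step a (by omega)
      · exact (step b (by omega)).symm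
      · exact wrap.symm
      · exact wrap
  -- conclusion
  have hinj : Function.Injective (fun i : Fin N => L i.val) := by
    intro i j hLe
    by_contra hne
    rcases Nat.lt_or_ge i.val j.val with h | h
    · exact inj i.val j.val h j.isLt hLe
    · have : j.val < i.val := by
        rcases Nat.lt_or_ge j.val i.val with h' | h'
        · exact h'
        · exact absurd (Fin.ext (by omega)) hne
      exact inj j.val i.val this i.isLt hLe.symm
  apply hch N (by omega)
  refine ⟨⟨fun i => L i.val, hinj⟩, ?_⟩
  intro i j
  rw [SimpleGraph.cycleGraph_adj']
  have subval : ∀ u v : Fin N, (u - v).val = 1 ↔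
      (u.val = v.val + 1 ∨ (v.val = N - 1 ∧ u.val = 0)) := by
    intro u v
    have hu := u.isLt
    have hv := v.isLt
    rw [Fin.sub_def]
    simp only
    rcases le_or_gt v.val u.val with h | h
    · have he : (N - v.val) + u.val = N + (u.val - v.val) := by omega
      rw [he, Nat.add_mod_left, Nat.mod_eq_of_lt (by omega)]
      omega
    · rw [Nat.mod_eq_of_lt (by omega)]
      omega
  simp only [Function.Embedding.coeFn_mk]
  rw [key i.val j.val i.isLt j.isLt, subval i j, subval j i]
  have hi := i.isLt
  have hj := j.isLt
  omega


section Dirac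

variable {V : Type*} [Fintype V] [DecidableEq V]

lemma reach_mono {H H' : SimpleGraph V} (h : H ≤ H') {x y : V}
    (hr : H.Reachable x y) : H'.Reachable x y := by
  obtain ⟨w⟩ := hr
  exact ⟨w.mapLe h⟩

/-- simplicial within the induced subgraph on `s` -/
def SimpIn (G : SimpleGraph V) (s : Finset V) (u : V) : Prop :=
  ∀ a ∈ s, ∀ b ∈ s, G.Adj u a → G.Adj u b → a ≠ b → G.Adj a b

lemma dirac {G : SimpleGraph V} (hch : IsChordalGraph G) (s : Finset V) :
    (∀ a ∈ s, ∀ b ∈ s, a ≠ b → G.Adj a b) ∨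
    ∃ u ∈ s, ∃ w ∈ s, u ≠ w ∧ ¬ G.Adj u w ∧ SimpIn G s u ∧ SimpIn G s w := by
  classical
  induction s using Finset.strongInduction with
  | _ s ih =>
  by_cases hcomp : ∀ a ∈ s, ∀ b ∈ s, a ≠ b → G.Adj a b
  · exact Or.inl hcomp
  right
  push_neg at hcomp
  obtain ⟨a, ha, b, hb, hab, hnadj⟩ := hcomp
  set sepP : Finset V → Prop :=
    fun S => ¬ (rg G ↑(s \ S)).Reachable a b with hsepP
  have hfull : sepP (s \ {a, b}) := by
    intro hr
    have hba : b = a := by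
      refine reach_closed (P := fun z => z = a) ?_ hr rfl
      intro p q hp hadj
      have hq' : q ∈ s \ (s \ {a, b}) := Finset.mem_coe.mp hadj.2.1
      simp only [Finset.mem_sdiff, Finset.mem_insert, Finset.mem_singleton] at hq'
      have hq2 : q = a ∨ q = b := by tauto
      rcases hq2 with h | h
      · exact h
      · exfalso
        rw [hp, h] at hadj
        exact hnadj hadj.2.2
    exact hab hba.symm
  obtain ⟨S, hSmem, hSmin⟩ := Finset.exists_min_image
    (((s \ {a, b}).powerset).filter sepP) Finset.card
    ⟨s \ {a, b}, Finset.mem_filter.mpr ⟨Finset.mem_powerset.mpr le_rfl, hfull⟩⟩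
  rw [Finset.mem_filter, Finset.mem_powerset] at hSmem
  obtain ⟨hSsub, hSr⟩ := hSmem
  have haS : a ∉ S := fun h => by
    have := hSsub h; simp [Finset.mem_sdiff] at this
  have hbS : b ∉ S := fun h => by
    have := hSsub h; simp [Finset.mem_sdiff] at this
  have haD : a ∈ s \ S := Finset.mem_sdiff.mpr ⟨ha, haS⟩
  have hbD : b ∈ s \ S := Finset.mem_sdiff.mpr ⟨hb, hbS⟩
  set RS := rg G ↑(s \ S) with hRS
  set A := (s \ S).filter (fun z => RS.Reachable a z) with hA
  set B := (s \ S).filter (fun z => RS.Reachable b z) with hB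
  have haA : a ∈ A := Finset.mem_filter.mpr ⟨haD, SimpleGraph.Reachable.refl a⟩
  have hbB : b ∈ B := Finset.mem_filter.mpr ⟨hbD, SimpleGraph.Reachable.refl b⟩
  have hdisj : ∀ z ∈ A, z ∉ B := by
    intro z hz hz'
    rw [hA, Finset.mem_filter] at hz
    rw [hB, Finset.mem_filter] at hz'
    exact hSr (hz.2.trans hz'.2.symm)
  have hclosed : ∀ (c : V), ∀ p ∈ (s \ S).filter (fun z => RS.Reachable c z),
      ∀ z ∈ s \ S, G.Adj p z → z ∈ (s \ S).filter (fun z => RS.Reachable c z) := by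
    intro c p hp z hz hadj
    rw [Finset.mem_filter] at hp ⊢
    exact ⟨hz, hp.2.trans (SimpleGraph.Adj.reachable ⟨Finset.mem_coe.mpr hp.1,
      Finset.mem_coe.mpr hz, hadj⟩)⟩
  have hnoedge : ∀ p ∈ A, ∀ q ∈ B, ¬ G.Adj p q := by
    intro p hp q hq hadj
    have hq' : q ∈ A := by
      rw [hA]
      exact hclosed a p (hA ▸ hp) q (Finset.mem_filter.mp (hB ▸ hq)).1 hadj
    exact hdisj q hq' hq
  have hAsub : A ⊆ s \ S := hA ▸ Finset.filter_subset _ _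
  have hBsub : B ⊆ s \ S := hB ▸ Finset.filter_subset _ _
  -- key: deleting a non-neighbor x from S does not help connectivity
  have key : ∀ x ∈ S, ∀ (c : V), c ∈ s \ S →
      (∀ z ∈ (s \ S).filter (fun z => RS.Reachable c z), ¬ G.Adj x z) →
      ∀ d, (rg G ↑(s \ S.erase x)).Reachable c d →
        d ∈ (s \ S).filter (fun z => RS.Reachable c z) := by
    intro x hx c hc hnone d hr
    refine reach_closed (P := fun z => z ∈ (s \ S).filter (fun z => RS.Reachable c z))
      ?_ hr (Finset.mem_filter.mpr ⟨hc, SimpleGraph.Reachable.refl c⟩)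
    intro p q hp hadj
    have hq : q ∈ s \ S.erase x := Finset.mem_coe.mp hadj.2.1
    rw [Finset.mem_sdiff, Finset.mem_erase] at hq
    by_cases hqS : q ∈ S
    · have hqx : q = x := by tauto
      exact absurd (hqx ▸ hadj.2.2).symm (hnone p hp)
    · exact hclosed c p hp q (Finset.mem_sdiff.mpr ⟨hq.1, hqS⟩) hadj.2.2
  have eraseSep : ∀ x ∈ S, Finset.card S ≤ Finset.card (S.erase x) → False := by
    intro x hx hcard
    have := Finset.card_erase_lt_of_mem hx
    omega
  have hnbrA : ∀ x ∈ S, ∃ z ∈ A, G.Adj x z := by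
    intro x hx
    by_contra hnone
    push_neg at hnone
    have hsep' : sepP (S.erase x) := by
      intro hr
      have hd := key x hx a haD (fun z hz => hnone z (hA ▸ hz)) b hr
      exact hSr (Finset.mem_filter.mp hd).2
    apply eraseSep x hx
    apply hSmin
    rw [Finset.mem_filter, Finset.mem_powerset]
    exact ⟨(Finset.erase_subset x S).trans hSsub, hsep'⟩
  have hnbrB : ∀ x ∈ S, ∃ z ∈ B, G.Adj x z := by
    intro x hx
    by_contra hnone
    push_neg at hnone
    have hsep' : sepP (S.erase x) := by
      intro hr
      have hd := key x hx b hbD (fun z hz => hnone z (hB ▸ hz)) a hr.symm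
      exact hSr (Finset.mem_filter.mp hd).2.symm
    apply eraseSep x hx
    apply hSmin
    rw [Finset.mem_filter, Finset.mem_powerset]
    exact ⟨(Finset.erase_subset x S).trans hSsub, hsep'⟩
  -- connectivity within A (resp B)
  have htrans : ∀ (c : V), c ∈ s \ S →
      ∀ z ∈ (s \ S).filter (fun z => RS.Reachable c z),
        (rg G ↑((s \ S).filter (fun z => RS.Reachable c z))).Reachable c z := by
    intro c hc z hz
    set C := (s \ S).filter (fun z => RS.Reachable c z) with hC
    have hcC : c ∈ C := Finset.mem_filter.mpr ⟨hc, SimpleGraph.Reachable.refl c⟩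
    have hres : ∀ w, RS.Reachable c w → w ∈ s \ S → w ∈ C ∧ (rg G ↑C).Reachable c w := by
      intro w hw hwD
      refine (reach_closed (P := fun z => z ∈ C ∧ (rg G ↑C).Reachable c z)
        ?_ hw ⟨hcC, SimpleGraph.Reachable.refl c⟩)
      intro p q hp hadj
      have hqD : q ∈ s \ S := Finset.mem_coe.mp hadj.2.1
      have hqC : q ∈ C := hclosed c p hp.1 q hqD hadj.2.2
      exact ⟨hqC, hp.2.trans (SimpleGraph.Adj.reachable
        ⟨Finset.mem_coe.mpr hp.1, Finset.mem_coe.mpr hqC, hadj.2.2⟩)⟩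
    exact (hres z (Finset.mem_filter.mp hz).2 (Finset.mem_filter.mp hz).1).2
  -- S is a clique
  have hSclq : ∀ p ∈ S, ∀ q ∈ S, p ≠ q → G.Adj p q := by
    intro p hp q hq hpq
    by_contra hnadjpq
    obtain ⟨za, hza, hadjza⟩ := hnbrA p hp
    obtain ⟨z'a, hz'a, hadjz'a⟩ := hnbrA q hq
    obtain ⟨zb, hzb, hadjzb⟩ := hnbrB p hp
    obtain ⟨z'b, hz'b, hadjz'b⟩ := hnbrB q hq
    have hpA : p ∉ (↑A : Set V) := fun h =>
      (Finset.mem_sdiff.mp (hAsub (Finset.mem_coe.mp h))).2 hp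
    have hqA : q ∉ (↑A : Set V) := fun h =>
      (Finset.mem_sdiff.mp (hAsub (Finset.mem_coe.mp h))).2 hq
    have hpB : p ∉ (↑B : Set V) := fun h =>
      (Finset.mem_sdiff.mp (hBsub (Finset.mem_coe.mp h))).2 hp
    have hqB : q ∉ (↑B : Set V) := fun h =>
      (Finset.mem_sdiff.mp (hBsub (Finset.mem_coe.mp h))).2 hq
    have hle1 : rg G ↑A ≤ rg G (↑A ∪ {p, q}) :=
      fun v w h => ⟨Or.inl h.1, Or.inl h.2.1, h.2.2⟩
    have hle2 : rg G ↑B ≤ rg G (↑B ∪ {p, q}) :=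
      fun v w h => ⟨Or.inl h.1, Or.inl h.2.1, h.2.2⟩
    have hrA : (rg G ↑A).Reachable za z'a := by
      have h1 := htrans a haD za (hA ▸ hza)
      have h2 := htrans a haD z'a (hA ▸ hz'a)
      exact (hA ▸ h1.symm.trans h2)
    have hrB : (rg G ↑B).Reachable zb z'b := by
      have h1 := htrans b hbD zb (hB ▸ hzb)
      have h2 := htrans b hbD z'b (hB ▸ hz'b)
      exact (hB ▸ h1.symm.trans h2)
    have e1 : (rg G (↑A ∪ {p, q})).Adj p za :=
      ⟨Or.inr (Or.inl rfl), Or.inl (Finset.mem_coe.mpr hza), hadjza⟩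
    have e2 : (rg G (↑A ∪ {p, q})).Adj z'a q :=
      ⟨Or.inl (Finset.mem_coe.mpr hz'a), Or.inr (Or.inr rfl), hadjz'a.symm⟩
    have e3 : (rg G (↑B ∪ {p, q})).Adj q z'b :=
      ⟨Or.inr (Or.inr rfl), Or.inl (Finset.mem_coe.mpr hz'b), hadjz'b⟩
    have e4 : (rg G (↑B ∪ {p, q})).Adj zb p :=
      ⟨Or.inl (Finset.mem_coe.mpr hzb), Or.inr (Or.inl rfl), hadjzb.symm⟩
    exact chordal_sep hch (A := ↑A) (B := ↑B) (x := p) (y := q)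
      (fun α hα β hβ => hnoedge α (Finset.mem_coe.mp hα) β (Finset.mem_coe.mp hβ))
      (fun α hα h => hdisj α (Finset.mem_coe.mp hα) (Finset.mem_coe.mp h))
      hpA hpB hqA hqB hnadjpq hpq
      (e1.reachable.trans ((reach_mono hle1 hrA).trans e2.reachable))
      (e3.reachable.trans ((reach_mono hle2 hrB.symm).trans e4.reachable))
  -- apply induction hypothesis to A ∪ S and B ∪ S
  have getSimp : ∀ (c : V), c ∈ s \ S →
      ∀ C, C = (s \ S).filter (fun z => RS.Reachable c z) →
      ∃ u ∈ C, SimpIn G s u := by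
    intro c hc C hCdef
    have hcC : c ∈ C := hCdef ▸ Finset.mem_filter.mpr ⟨hc, SimpleGraph.Reachable.refl c⟩
    have hCsub : C ⊆ s \ S := hCdef ▸ Finset.filter_subset _ _
    have hCS : C ∪ S ⊂ s := by
      constructor
      · intro z hz
        rcases Finset.mem_union.mp hz with h | h
        · exact (Finset.mem_sdiff.mp (hCsub h)).1
        · exact (Finset.mem_sdiff.mp (hSsub h)).1
      · intro hss
        -- both a and b cannot be in C ∪ S; at least one of them is missing
        have hamem := hss ha
        have hbmem := hss hb
        rcases Finset.mem_union.mp hamem with h1 | h1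
        · rcases Finset.mem_union.mp hbmem with h2 | h2
          · -- a, b ∈ C: both reachable from c, contradiction
            have r1 := (Finset.mem_filter.mp (hCdef ▸ h1)).2
            have r2 := (Finset.mem_filter.mp (hCdef ▸ h2)).2
            exact hSr (r1.symm.trans r2)
          · exact hbS h2
        · exact haS h1
    -- a vertex of C simplicial in C ∪ S
    have hCstep : ∀ u ∈ C, ∀ z ∈ s, G.Adj u z → z ∈ C ∪ S := by
      intro u hu z hz hadj
      by_cases hzS : z ∈ S
      · exact Finset.mem_union_right _ hzS
      · refine Finset.mem_union_left _ ?_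
        exact hCdef ▸ hclosed c u (hCdef ▸ hu) z (Finset.mem_sdiff.mpr ⟨hz, hzS⟩) hadj
    obtain ⟨u, hu, husimp⟩ : ∃ u ∈ C, SimpIn G (C ∪ S) u := by
      rcases ih (C ∪ S) hCS with hcomp' | ⟨u, hu, w, hw, huw, hnuw, hsu, hsw⟩
      · exact ⟨c, hcC, fun α hα β hβ _ _ hne => hcomp' α hα β hβ hne⟩
      · rcases Finset.mem_union.mp hu with h1 | h1
        · exact ⟨u, h1, hsu⟩
        · rcases Finset.mem_union.mp hw with h2 | h2
          · exact ⟨w, h2, hsw⟩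
          · exact absurd (hSclq u h1 w h2 huw) hnuw
    refine ⟨u, hu, ?_⟩
    intro α hα β hβ hadjα hadjβ hne
    exact husimp α (hCstep u hu α hα hadjα) β (hCstep u hu β hβ hadjβ) hadjα hadjβ hne
  obtain ⟨u, huA, husimp⟩ := getSimp a haD A hA
  obtain ⟨w, hwB, hwsimp⟩ := getSimp b hbD B hB
  refine ⟨u, (Finset.mem_sdiff.mp (hAsub huA)).1, w, (Finset.mem_sdiff.mp (hBsub hwB)).1,
    ?_, hnoedge u huA w hwB, husimp, hwsimp⟩
  intro h
  exact hdisj u huA (h ▸ hwB)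

end Dirac


-- ===== Part II =====
section Clutter

variable {V : Type*} [Fintype V] [DecidableEq V]

/-- The inner deletion induction: peeling off all `(t-1)`-subedges containing a
simplicial vertex `v` in colex order. -/
lemma inner_induction (G : SimpleGraph V) (t : ℕ) (ht : 2 ≤ t) (v : V)
    (hsimp : ∀ α β, G.Adj v α → G.Adj v β → α ≠ β → G.Adj α β)
    (ord : V → ℕ) (hord : Function.Injective ord)
    (E : Finset (Finset V))
    (hE : ∀ e, e ∈ E ↔ (v ∈ e ∧ e.card = t - 1 ∧ ∀ z ∈ e, z = v ∨ G.Adj v z))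
    (hrec : ChordalClutter t {F | G.IsNClique t F ∧ v ∉ F}) :
    ∀ (n : ℕ) (S : Finset (Finset V)), S ⊆ E → (E \ S).card ≤ n →
      (∀ f ∈ E, ∀ f' ∈ E, nuEnc ord f' < nuEnc ord f → f ∈ S → f' ∈ S) →
      ChordalClutter t {F | G.IsNClique t F ∧ ∀ e ∈ S, ¬ e ⊆ F} := by
  classical
  -- the closed neighborhood of v is a clique
  have hK : ∀ p, (p = v ∨ G.Adj v p) → ∀ q, (q = v ∨ G.Adj v q) → p ≠ q → G.Adj p q := by
    intro p hp q hq hne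
    rcases hp with rfl | hp
    · rcases hq with rfl | hq
      · exact absurd rfl hne
      · exact hq
    · rcases hq with rfl | hq
      · exact hp.symm
      · exact hsimp p q hp hq hne
  -- vertices of t-cliques containing v are in the closed neighborhood
  have hcliqueK : ∀ F : Finset V, G.IsNClique t F → v ∈ F → ∀ z ∈ F, z = v ∨ G.Adj v z := by
    intro F hF hvF z hz
    by_cases hzv : z = v
    · exact Or.inl hzv
    · exact Or.inr (hF.isClique (Finset.mem_coe.mpr hvF) (Finset.mem_coe.mpr hz)
        (fun h => hzv h.symm))
  intro n
  induction n with
  | zero =>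
    intro S hSE hcard hdown
    have hSeq : S = E := by
      apply Finset.Subset.antisymm hSE
      intro e he
      by_contra heS
      have : e ∈ E \ S := Finset.mem_sdiff.mpr ⟨he, heS⟩
      have := Finset.card_pos.mpr ⟨e, this⟩
      omega
    subst hSeq
    have hset : {F | G.IsNClique t F ∧ ∀ e ∈ S, ¬ e ⊆ F} = {F | G.IsNClique t F ∧ v ∉ F} := by
      ext F
      simp only [Set.mem_setOf_eq]
      constructor
      · rintro ⟨hclq, hav⟩
        refine ⟨hclq, ?_⟩
        intro hvF
        obtain ⟨u, huF, huv⟩ := Finset.exists_mem_ne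
          (by rw [hclq.card_eq]; omega) v
        have he : F.erase u ∈ S := by
          rw [hE]
          refine ⟨Finset.mem_erase.mpr ⟨fun h => huv h.symm, hvF⟩, ?_, ?_⟩
          · rw [Finset.card_erase_of_mem huF, hclq.card_eq]
          · intro z hz
            exact hcliqueK F hclq hvF z (Finset.erase_subset u F hz)
        exact hav _ he (Finset.erase_subset u F)
      · rintro ⟨hclq, hvF⟩
        refine ⟨hclq, ?_⟩
        intro e heS hesub
        rw [hE] at heS
        exact hvF (hesub heS.1)
    rw [hset]
    exact hrec
  | succ n ih =>
    intro S hSE hcard hdown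
    by_cases hES : E \ S = ∅
    · -- same as base case : S = E
      exact ih S hSE (by rw [hES]; simp) hdown
    · obtain ⟨e, heES, hemin⟩ := Finset.exists_min_image (E \ S) (nuEnc ord)
        (Finset.nonempty_of_ne_empty hES)
      rw [Finset.mem_sdiff] at heES
      obtain ⟨heE, heS⟩ := heES
      have heprops := (hE e).mp heE
      obtain ⟨hve, hecard, heK⟩ := heprops
      -- S is exactly the set of elements of E with smaller nu
      have hSeq : ∀ e' ∈ E, (e' ∈ S ↔ nuEnc ord e' < nuEnc ord e) := by
        intro e' he'E
        constructor
        · intro he'S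
          rcases lt_trichotomy (nuEnc ord e') (nuEnc ord e) with h | h | h
          · exact h
          · exfalso
            have hne : e' ≠ e := fun hh => heS (hh ▸ he'S)
            exact nuEnc_inj ord hord hne h
          · exact absurd (hdown e' he'E e heE h he'S) heS
        · intro hlt
          by_contra he'S
          have := hemin e' (Finset.mem_sdiff.mpr ⟨he'E, he'S⟩)
          omega
      set S' := insert e S with hS'
      have hS'E : S' ⊆ E := by
        intro f hf
        rcases Finset.mem_insert.mp hf with rfl | hf
        · exact heE
        · exact hSE hf
      have hcard' : (E \ S').card ≤ n := by
        have hdiffeq : E \ S' = (E \ S).erase e := by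
          ext f
          simp only [hS', Finset.mem_sdiff, Finset.mem_erase, Finset.mem_insert]
          tauto
        rw [hdiffeq, Finset.card_erase_of_mem (Finset.mem_sdiff.mpr ⟨heE, heS⟩)]
        omega
      have hdown' : ∀ f ∈ E, ∀ f' ∈ E, nuEnc ord f' < nuEnc ord f → f ∈ S' → f' ∈ S' := by
        intro f hfE f' hf'E hlt hfS'
        rcases Finset.mem_insert.mp hfS' with rfl | hfS
        · exact Finset.mem_insert_of_mem ((hSeq f' hf'E).mpr hlt)
        · exact Finset.mem_insert_of_mem (hdown f hfE f' hf'E hlt hfS)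
      have hrec' := ih S' hS'E hcard' hdown'
      set CS : Set (Finset V) := {F | G.IsNClique t F ∧ ∀ e' ∈ S, ¬ e' ⊆ F} with hCS
      have hCS' : {F | G.IsNClique t F ∧ ∀ e' ∈ S', ¬ e' ⊆ F} = clutterDel CS e := by
        ext F
        simp only [hCS, hS', clutterDel, Set.mem_setOf_eq, Finset.mem_insert]
        constructor
        · rintro ⟨h1, h2⟩
          exact ⟨⟨h1, fun e' he' => h2 e' (Or.inr he')⟩, h2 e (Or.inl rfl)⟩
        · rintro ⟨⟨h1, h2⟩, h3⟩
          refine ⟨h1, ?_⟩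
          rintro e' (rfl | he')
          · exact h3
          · exact h2 e' he'
      rw [hCS'] at hrec'
      by_cases hmax : ∃ u, u ∉ e ∧ insert u e ∈ CS
      · refine ChordalClutter.step e hecard hmax ?_ hrec'
        -- simpliciality
        intro F hFcard hFsub
        -- the closed neighborhood is contained in the closed nbhd of v
        have hnbhdK : ∀ z ∈ clutterNbhd CS e, z = v ∨ G.Adj v z := by
          intro z hz
          rcases hz with hz | hz
          · exact heK z (Finset.mem_coe.mp hz)
          · -- insert z e ∈ CS
            have hclq : G.IsNClique t (insert z e) := hz.1
            have hvz : v ∈ insert z e := Finset.mem_insert_of_mem hve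
            exact hcliqueK _ hclq hvz z (Finset.mem_insert_self z e)
        have hFK : ∀ z ∈ F, z = v ∨ G.Adj v z := by
          intro z hz
          exact hnbhdK z (hFsub (Finset.mem_coe.mpr hz))
        have hFclq : G.IsNClique t F := by
          rw [SimpleGraph.isNClique_iff]
          refine ⟨?_, hFcard⟩
          intro p hp q hq hne
          exact hK p (hFK p (Finset.mem_coe.mp hp)) q (hFK q (Finset.mem_coe.mp hq)) hne
        refine ⟨hFclq, ?_⟩
        intro e' he'S he'F
        have he'E := hSE he'S
        have hlt : nuEnc ord e' < nuEnc ord e := (hSeq e' he'E).mp he'S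
        have hne : e' ≠ e := fun hh => heS (hh ▸ he'S)
        obtain ⟨m, hme, hme', hmmax⟩ := nuEnc_colex ord hord hne hlt
        obtain ⟨hve', he'card, he'K⟩ := (hE e').mp he'E
        -- every vertex of F beyond e has larger ord than every non-v vertex of e
        have hbig : ∀ w ∈ F, w ∉ e → ∀ x ∈ e, x ≠ v → ord x < ord w := by
          intro w hwF hwe x hxe hxv
          by_contra hle
          have hwx : w ≠ x := fun hh => hwe (hh ▸ hxe)
          have hwlt : ord w < ord x := by
            rcases lt_trichotomy (ord w) (ord x) with h | h | h
            · exact h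
            · exact absurd (hord h) hwx
            · omega
          have hwnb : insert w e ∈ CS := by
            have := hFsub (Finset.mem_coe.mpr hwF)
            rcases this with h | h
            · exact absurd (Finset.mem_coe.mp h) hwe
            · exact h
          -- the subedge insert w (e.erase x) was deleted earlier
          set e'' := insert w (e.erase x) with he''
          have he''E : e'' ∈ E := by
            rw [hE]
            refine ⟨Finset.mem_insert_of_mem (Finset.mem_erase.mpr ⟨fun h => hxv h.symm, hve⟩),
              ?_, ?_⟩
            · rw [Finset.card_insert_of_notMem (fun h => hwe (Finset.erase_subset x e h)),
                Finset.card_erase_of_mem hxe, hecard]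
              omega
            · intro z hz
              rcases Finset.mem_insert.mp hz with h | hz
              · subst h
                exact hcliqueK _ hwnb.1 (Finset.mem_insert_of_mem hve) z
                  (Finset.mem_insert_self z e)
              · exact heK z (Finset.erase_subset x e hz)
          have he''lt : nuEnc ord e'' < nuEnc ord e := by
            apply nuEnc_lt ord hord (hmB := hxe)
            · rw [he'']
              intro h
              rcases Finset.mem_insert.mp h with h | h
              · exact hwx h.symm
              · exact (Finset.mem_erase.mp h).1 rfl
            · intro z hze'' hze
              rcases Finset.mem_insert.mp hze'' with rfl | hz
              · exact hwlt
              · exact absurd (Finset.erase_subset x e hz) hze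
          have he''S : e'' ∈ S := (hSeq e'' he''E).mpr he''lt
          apply hwnb.2 e'' he''S
          rw [he'']
          intro z hz
          rcases Finset.mem_insert.mp hz with rfl | hz
          · exact Finset.mem_insert_self z e
          · exact Finset.mem_insert_of_mem (Finset.erase_subset x e hz)
        -- m is the colex-max of the symmetric difference, m ∈ e, m ∉ e'
        obtain ⟨w₀, hw₀e', hw₀e⟩ : ∃ w₀, w₀ ∈ e' ∧ w₀ ∉ e := by
          by_contra h
          push_neg at h
          have : e' = e := Finset.eq_of_subset_of_card_le h (by omega)
          exact hne this
        have hw₀F : w₀ ∈ F := he'F hw₀e'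
        have hmv : m ≠ v := fun hh => hme' (hh ▸ hve')
        have h1 : ord m < ord w₀ := hbig w₀ hw₀F hw₀e m hme hmv
        have h2 : ord w₀ ≤ ord m := hmmax w₀ (Or.inl ⟨hw₀e', hw₀e⟩)
        omega
      · -- e is not a maximal subedge : deleting it changes nothing
        have hsame : clutterDel CS e = CS := by
          ext F
          simp only [clutterDel, Set.mem_setOf_eq]
          constructor
          · rintro ⟨h1, _⟩; exact h1
          · intro hF
            refine ⟨hF, ?_⟩
            intro hesub
            have hcardF : F.card = t := hF.1.card_eq
            obtain ⟨u, huF, hue⟩ : ∃ u, u ∈ F ∧ u ∉ e := by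
              by_contra h
              push_neg at h
              have : F ⊆ e := h
              have := Finset.card_le_card this
              omega
            have hFeq : insert u e = F := by
              apply Finset.eq_of_subset_of_card_le
              · intro z hz
                rcases Finset.mem_insert.mp hz with rfl | hz
                · exact huF
                · exact hesub hz
              · rw [Finset.card_insert_of_notMem hue, hecard, hcardF]
                omega
            exact hmax ⟨u, hue, hFeq ▸ hF⟩
        rw [hsame] at hrec'
        exact hrec'

end Clutter

section Outer

variable {V : Type*} [Fintype V] [DecidableEq V]

/-- delete all edges at `v` -/
def delV (G : SimpleGraph V) (v : V) : SimpleGraph V where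
  Adj x y := G.Adj x y ∧ x ≠ v ∧ y ≠ v
  symm := ⟨fun x y h => ⟨h.1.symm, h.2.2, h.2.1⟩⟩
  loopless := ⟨fun x h => G.loopless.irrefl x h.1⟩

lemma delV_chordal {G : SimpleGraph V} (hch : IsChordalGraph G) (v : V) :
    IsChordalGraph (delV G v) := by
  intro n hn ⟨f, hf⟩
  haveI : NeZero n := ⟨by omega⟩
  have hfv : ∀ i, f i ≠ v := by
    intro i hiv
    have hc : (SimpleGraph.cycleGraph n).Adj i (i + 1) := by
      rw [SimpleGraph.cycleGraph_adj']
      right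
      rw [add_sub_cancel_left]
      rw [Fin.val_one']
      exact Nat.mod_eq_of_lt (by omega)
    have := (hf i (i + 1)).mpr hc
    exact this.2.1 hiv
  apply hch n hn
  refine ⟨f, ?_⟩
  intro i j
  rw [← hf i j]
  constructor
  · intro h
    exact ⟨h, hfv i, hfv j⟩
  · intro h
    exact h.1

lemma delV_cliques {G : SimpleGraph V} (v : V) {t : ℕ} (ht : 2 ≤ t) :
    tCliqueClutter (delV G v) t = {F | G.IsNClique t F ∧ v ∉ F} := by
  ext F
  simp only [tCliqueClutter, Set.mem_setOf_eq]
  constructor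
  · intro hF
    have hFcard := hF.card_eq
    refine ⟨⟨fun p hp q hq hne => (hF.isClique hp hq hne).1, hFcard⟩, ?_⟩
    intro hvF
    obtain ⟨u, huF, huv⟩ := Finset.exists_mem_ne (by omega : 1 < F.card) v
    have := hF.isClique (Finset.mem_coe.mpr hvF) (Finset.mem_coe.mpr huF) (fun h => huv h.symm)
    exact this.2.1 rfl
  · rintro ⟨hF, hvF⟩
    refine ⟨fun p hp q hq hne => ⟨hF.isClique hp hq hne, ?_, ?_⟩, hF.card_eq⟩
    · rintro rfl; exact hvF (Finset.mem_coe.mp hp)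
    · rintro rfl; exact hvF (Finset.mem_coe.mp hq)

lemma outer_induction (t : ℕ) (ht : 2 ≤ t) :
    ∀ (n : ℕ) (G : SimpleGraph V) (supp : Finset V),
      (∀ z, z ∈ supp ↔ ∃ w, G.Adj z w) → IsChordalGraph G →
      supp.card ≤ n →
      ChordalClutter t (tCliqueClutter G t) := by
  classical
  intro n
  induction n with
  | zero =>
    intro G supp hsuppmem hch hcard
    apply ChordalClutter.no_edges
    ext F
    simp only [tCliqueClutter, Set.mem_setOf_eq, Set.mem_empty_iff_false, iff_false]
    intro hF
    obtain ⟨p, hpF, q, hqF, hpq⟩ := Finset.one_lt_card.mp (by rw [hF.card_eq]; omega)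
    have hadj := hF.isClique (Finset.mem_coe.mpr hpF) (Finset.mem_coe.mpr hqF) hpq
    have : p ∈ supp := (hsuppmem p).mpr ⟨q, hadj⟩
    rw [Finset.card_eq_zero.mp (Nat.le_zero.mp hcard)] at this
    exact absurd this (Finset.notMem_empty p)
  | succ n ih =>
    intro G supp hsuppmem hch hcard
    by_cases hemp : supp = ∅
    · apply ChordalClutter.no_edges
      ext F
      simp only [tCliqueClutter, Set.mem_setOf_eq, Set.mem_empty_iff_false, iff_false]
      intro hF
      obtain ⟨p, hpF, q, hqF, hpq⟩ := Finset.one_lt_card.mp (by rw [hF.card_eq]; omega)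
      have hadj := hF.isClique (Finset.mem_coe.mpr hpF) (Finset.mem_coe.mpr hqF) hpq
      have : p ∈ supp := (hsuppmem p).mpr ⟨q, hadj⟩
      rw [hemp] at this
      exact absurd this (Finset.notMem_empty p)
    · -- find a simplicial vertex in the support
      obtain ⟨v, hvsupp, hvsimp⟩ :
          ∃ v, v ∈ supp ∧ ∀ α β, G.Adj v α → G.Adj v β → α ≠ β → G.Adj α β := by
        have hadjsupp : ∀ {p q : V}, G.Adj p q → p ∈ supp :=
          fun {p q} h => (hsuppmem p).mpr ⟨q, h⟩
        rcases dirac hch supp with hcomp | ⟨u, hu, w, hw, _, _, husimp, _⟩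
        · obtain ⟨v, hv⟩ := Finset.nonempty_of_ne_empty hemp
          refine ⟨v, hv, ?_⟩
          intro α β h1 h2 hne
          exact hcomp α (hadjsupp h1.symm) β (hadjsupp h2.symm) hne
        · refine ⟨u, hu, ?_⟩
          intro α β h1 h2 hne
          exact husimp α (hadjsupp h1.symm) β (hadjsupp h2.symm) h1 h2 hne
      -- delete v and recurse
      set G' := delV G v with hG'
      have hch' : IsChordalGraph G' := delV_chordal hch v
      set supp' := (Finset.univ.filter (fun z => ∃ w, G'.Adj z w) : Finset V) with hsupp'
      have hsuppmem' : ∀ z, z ∈ supp' ↔ ∃ w, G'.Adj z w := by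
        intro z
        rw [hsupp', Finset.mem_filter]
        simp
      have hsub : supp' ⊆ supp.erase v := by
        intro z hz
        obtain ⟨w, hw⟩ := (hsuppmem' z).mp hz
        exact Finset.mem_erase.mpr ⟨hw.2.1, (hsuppmem z).mpr ⟨w, hw.1⟩⟩
      have hcard' : supp'.card ≤ n := by
        have h1 := Finset.card_le_card hsub
        have h2 := Finset.card_erase_of_mem hvsupp
        omega
      have hrec := ih G' supp' hsuppmem' hch' hcard'
      rw [delV_cliques v ht] at hrec
      -- now peel off the subedges containing v
      set ord : V → ℕ := fun x => (Fintype.equivFin V x : ℕ) with hord'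
      have hord : Function.Injective ord := by
        intro x y h
        exact (Fintype.equivFin V).injective (Fin.ext h)
      set E : Finset (Finset V) := Finset.univ.powerset.filter
        (fun e => v ∈ e ∧ e.card = t - 1 ∧ ∀ z ∈ e, z = v ∨ G.Adj v z) with hE'
      have hE : ∀ e, e ∈ E ↔ (v ∈ e ∧ e.card = t - 1 ∧ ∀ z ∈ e, z = v ∨ G.Adj v z) := by
        intro e
        rw [hE', Finset.mem_filter]
        simp
      have := inner_induction G t ht v hvsimp ord hord E hE hrec (E \ ∅).card ∅
        (Finset.empty_subset E) le_rfl (by simp)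
      have hempty : {F | G.IsNClique t F ∧ ∀ e ∈ (∅ : Finset (Finset V)), ¬ e ⊆ F} =
          tCliqueClutter G t := by
        ext F
        simp [tCliqueClutter]
      rw [hempty] at this
      exact this

end Outer

/-- for every chordal graph `G` and every `t ≥ 2`, the `t`-clique
clutter `CH_t(G)` is a chordal clutter. -/
theorem statement16 {V : Type*} [Fintype V] [DecidableEq V]
    (G : SimpleGraph V) (hchordal : IsChordalGraph G) (t : ℕ) (ht : 2 ≤ t) :
    ChordalClutter t (tCliqueClutter G t) := by
  classical
  exact outer_induction t ht
    (Finset.univ.filter (fun z => ∃ w, G.Adj z w) : Finset V).card G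
    (Finset.univ.filter (fun z => ∃ w, G.Adj z w))
    (fun z => by rw [Finset.mem_filter]; simp) hchordal le_rfl
end

section
/- Let G be a finite simple chordal graph, let t ≥ 2 be an integer, let x₁ be a simplicial vertex of G with deg_G(x₁) = d − 1 ≥ t − 1 and N_G(x₁) = {x₂, …, x_d}. List the (t−1)-element subsets of {x₁, …, x_{d−1}} containing x₁ in lexicographic order as e_1 < e_2 < ⋯ < e_m, where m = C(d−2, t−2), and for 1 ≤ i ≤ m set Ω_i(G) = CH_t(G) ∖ e_1 ∖ ⋯ ∖ e_{i−1}. Then for every 1 ≤ i ≤ m the set e_i is a simplicial maximal subedge of Ω_i(G), and Ω_{m+1}(G) := CH_t(G) ∖ e_1 ∖ ⋯ ∖ e_m equals the t-clique clutter CH_t(G ∖ x₁) of the graph obtained by deleting x₁. -/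
/-- Lexicographic comparison of finite sets of a linear order (for sets of equal
cardinality this is the lexicographic order on the increasing enumerations): the
smallest element where `I` and `J` differ belongs to `I`. -/
def FinsetLexLT {α : Type*} [LinearOrder α] (I J : Finset α) : Prop :=
  ∃ a, a ∈ I ∧ a ∉ J ∧ ∀ b, b < a → (b ∈ I ↔ b ∈ J)

lemma finsetLexLT_asymm {α : Type*} [LinearOrder α] {I J : Finset α}
    (h1 : FinsetLexLT I J) (h2 : FinsetLexLT J I) : False := by
  obtain ⟨a, haI, haJ, ha⟩ := h1
  obtain ⟨b, hbJ, hbI, hb⟩ := h2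
  rcases lt_trichotomy a b with h | h | h
  · exact haJ ((hb a h).mpr haI)
  · exact hbI (h ▸ haI)
  · exact hbI ((ha b h).mpr hbJ)

/-- let `x 0` be a simplicial vertex of the chordal graph `G` with
neighborhood `{x 1, …, x (d-1)}` (so `deg (x 0) = d - 1 ≥ t - 1`), and let
`e 0 < e 1 < ⋯ < e (m-1)` be the lexicographic enumeration of the `(t-1)`-subsets of
`{x 0, …, x (d-2)}` containing `x 0`, where `m = C(d-2, t-2)`. With
`Ω i = CH_t(G) ∖ e 0 ∖ ⋯ ∖ e (i-1) = {F ∈ CH_t(G) | ∀ j < i, ¬ e j ⊆ F}`, each `e i`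
is a simplicial maximal subedge of `Ω i`, and `Ω m = CH_t(G ∖ x 0)`, the clutter of
`t`-cliques of `G` avoiding `x 0`. -/
theorem statement17 {V : Type*} [Fintype V] [DecidableEq V]
    (G : SimpleGraph V) (t : ℕ) (ht : 2 ≤ t) (hchordal : IsChordalGraph G)
    (d : ℕ) (hd : t ≤ d)
    (x : Fin d → V) (hxinj : Function.Injective x)
    (hsimplicial : G.IsClique (G.neighborSet (x ⟨0, by omega⟩)))
    (hnbhd : G.neighborSet (x ⟨0, by omega⟩) = x '' {i : Fin d | i ≠ ⟨0, by omega⟩})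
    (m : ℕ) (hm : m = Nat.choose (d - 2) (t - 2))
    (e : Fin m → Finset V)
    (he_mem : ∀ i : Fin m, x ⟨0, by omega⟩ ∈ e i ∧ (e i).card = t - 1 ∧
      (↑(e i) : Set V) ⊆ x '' {k : Fin d | (k : ℕ) < d - 1})
    (he_inj : Function.Injective e)
    (he_surj : ∀ f : Finset V, x ⟨0, by omega⟩ ∈ f → f.card = t - 1 →
      (↑f : Set V) ⊆ x '' {k : Fin d | (k : ℕ) < d - 1} → ∃ i, e i = f)
    (he_lex : ∀ i j : Fin m, i < j →
      FinsetLexLT (Finset.univ.filter fun k : Fin d => x k ∈ e i)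
        (Finset.univ.filter fun k : Fin d => x k ∈ e j)) :
    (∀ i : Fin m,
      (∃ v, v ∉ e i ∧ insert v (e i) ∈
        {F : Finset V | G.IsNClique t F ∧ ∀ j : Fin m, (j : ℕ) < (i : ℕ) → ¬ e j ⊆ F}) ∧
      (∀ F : Finset V, F.card = t →
        (↑F : Set V) ⊆ clutterNbhd
          {F : Finset V | G.IsNClique t F ∧ ∀ j : Fin m, (j : ℕ) < (i : ℕ) → ¬ e j ⊆ F}
          (e i) →
        F ∈ {F : Finset V | G.IsNClique t F ∧ ∀ j : Fin m, (j : ℕ) < (i : ℕ) → ¬ e j ⊆ F})) ∧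
    {F : Finset V | G.IsNClique t F ∧ ∀ j : Fin m, (j : ℕ) < m → ¬ e j ⊆ F} =
      {F : Finset V | G.IsNClique t F ∧ x ⟨0, by omega⟩ ∉ F} := by
  have hd0 : 0 < d := by omega
  have hd1 : d - 1 < d := by omega
  have hx0nbhd : G.neighborSet (x ⟨0, hd0⟩) = x '' {i : Fin d | i ≠ ⟨0, hd0⟩} := hnbhd
  have hcl : G.IsClique (insert (x ⟨0, hd0⟩) (G.neighborSet (x ⟨0, hd0⟩))) :=
    SimpleGraph.IsClique.insert hsimplicial (fun b hb _ => hb)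
  have hmemN : ∀ k : Fin d, x k ∈ insert (x ⟨0, hd0⟩) (G.neighborSet (x ⟨0, hd0⟩)) := by
    intro k
    by_cases hk : k = ⟨0, hd0⟩
    · subst hk; exact Set.mem_insert _ _
    · exact Set.mem_insert_of_mem _ (hx0nbhd ▸ ⟨k, hk, rfl⟩)
  have hsubN : ∀ i : Fin m, (↑(e i) : Set V) ⊆
      insert (x ⟨0, hd0⟩) (G.neighborSet (x ⟨0, hd0⟩)) := by
    intro i v hv
    obtain ⟨k, _, rfl⟩ := (he_mem i).2.2 hv
    exact hmemN k
  have hxdnot : ∀ i : Fin m, x ⟨d - 1, hd1⟩ ∉ e i := by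
    intro i hvin
    obtain ⟨k, hk, hkeq⟩ := (he_mem i).2.2 (Finset.mem_coe.mpr hvin)
    have : k = ⟨d - 1, hd1⟩ := hxinj hkeq
    rw [this] at hk
    simp only [Set.mem_setOf_eq] at hk
    omega
  refine ⟨fun i => ⟨?_, ?_⟩, ?_⟩
  · -- existence of v : maximal subedge
    refine ⟨x ⟨d - 1, hd1⟩, hxdnot i, ?_, ?_⟩
    · constructor
      · refine hcl.subset ?_
        rw [Finset.coe_insert]
        exact Set.insert_subset (hmemN _) (hsubN i)
      · rw [Finset.card_insert_of_notMem (hxdnot i), (he_mem i).2.1]; omega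
    · intro j hj hsub
      have hsub2 : e j ⊆ e i := by
        intro u hu
        rcases Finset.mem_insert.mp (hsub hu) with h | h
        · exact absurd (h ▸ hu) (hxdnot j)
        · exact h
      have heq : e j = e i := Finset.eq_of_subset_of_card_le hsub2
        (by rw [(he_mem i).2.1, (he_mem j).2.1])
      have := he_inj heq
      rw [this] at hj
      omega
  · -- simpliciality
    intro F hFcard hFsub
    have hFN : (↑F : Set V) ⊆ insert (x ⟨0, hd0⟩) (G.neighborSet (x ⟨0, hd0⟩)) := by
      intro v hv
      rcases hFsub hv with h | h
      · exact hsubN i h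
      · simp only [Set.mem_setOf_eq] at h
        by_cases hvx : v = x ⟨0, hd0⟩
        · exact hvx ▸ Set.mem_insert _ _
        · have hadj : G.Adj (x ⟨0, hd0⟩) v := h.1.1
            (Finset.mem_coe.mpr (Finset.mem_insert_of_mem (he_mem i).1))
            (Finset.mem_coe.mpr (Finset.mem_insert_self _ _)) (Ne.symm hvx)
          exact Set.mem_insert_of_mem _ hadj
    refine ⟨⟨hcl.subset hFN, hFcard⟩, ?_⟩
    intro j hj hEjF
    have hlex := he_lex j i hj
    unfold FinsetLexLT at hlex
    obtain ⟨a0, ha0j, ha0i, hblw⟩ := hlex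
    simp only [Finset.mem_filter, Finset.mem_univ, true_and] at ha0j ha0i hblw
    -- a0 index < d - 1
    have ha0lt : (a0 : ℕ) < d - 1 := by
      obtain ⟨k, hk, hkeq⟩ := (he_mem j).2.2 (Finset.mem_coe.mpr ha0j)
      have : k = a0 := hxinj hkeq
      rw [this] at hk
      exact hk
    -- find w ∈ index(e i) with a0 < w
    have hw : ∃ w : Fin d, x w ∈ e i ∧ a0 < w := by
      by_contra hcon
      push_neg at hcon
      have hsub2 : e i ⊆ e j := by
        intro u hu
        obtain ⟨k, _, rfl⟩ := (he_mem i).2.2 (Finset.mem_coe.mpr hu)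
        have hk2 : k ≤ a0 := hcon k hu
        have hkne : k ≠ a0 := by rintro rfl; exact ha0i hu
        exact (hblw k (lt_of_le_of_ne hk2 hkne)).mpr hu
      have : e i = e j := Finset.eq_of_subset_of_card_le hsub2
        (by rw [(he_mem j).2.1, (he_mem i).2.1])
      exact ha0i (this ▸ ha0j)
    obtain ⟨w, hwi, haw⟩ := hw
    have hx0w : x ⟨0, hd0⟩ ≠ x w := by
      intro h
      have h2 : (⟨0, hd0⟩ : Fin d) = w := hxinj h
      have : (0 : ℕ) = (w : ℕ) := congrArg Fin.val h2
      have : (a0 : ℕ) < (w : ℕ) := haw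
      omega
    have ha0ei : x a0 ∉ (e i).erase (x w) := fun h => ha0i (Finset.mem_of_mem_erase h)
    have hx0f : x ⟨0, hd0⟩ ∈ insert (x a0) ((e i).erase (x w)) :=
      Finset.mem_insert_of_mem (Finset.mem_erase.mpr ⟨hx0w, (he_mem i).1⟩)
    have hcardf : (insert (x a0) ((e i).erase (x w))).card = t - 1 := by
      rw [Finset.card_insert_of_notMem ha0ei, Finset.card_erase_of_mem hwi,
        (he_mem i).2.1]
      omega
    have hfsub : (↑(insert (x a0) ((e i).erase (x w))) : Set V) ⊆
        x '' {k : Fin d | (k : ℕ) < d - 1} := by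
      intro u hu
      rcases Finset.mem_insert.mp (Finset.mem_coe.mp hu) with h | h
      · exact h ▸ ⟨a0, ha0lt, rfl⟩
      · exact (he_mem i).2.2 (Finset.mem_coe.mpr (Finset.mem_of_mem_erase h))
    obtain ⟨j', hj'⟩ := he_surj _ hx0f hcardf hfsub
    have hlexf : FinsetLexLT
        (Finset.univ.filter fun k : Fin d => x k ∈ insert (x a0) ((e i).erase (x w)))
        (Finset.univ.filter fun k : Fin d => x k ∈ e i) := by
      refine ⟨a0, ?_, ?_, ?_⟩
      · simp only [Finset.mem_filter, Finset.mem_univ, true_and]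
        exact Finset.mem_insert_self _ _
      · simp only [Finset.mem_filter, Finset.mem_univ, true_and]
        exact ha0i
      · intro b hb
        simp only [Finset.mem_filter, Finset.mem_univ, true_and, Finset.mem_insert,
          Finset.mem_erase]
        constructor
        · rintro (h | ⟨-, h⟩)
          · exact absurd (hxinj h) (ne_of_lt hb)
          · exact h
        · intro h
          refine Or.inr ⟨fun hbw => ?_, h⟩
          have : b = w := hxinj hbw
          rw [this] at hb
          exact absurd haw (not_lt.mpr (le_of_lt hb))
    have hj'i : (j' : ℕ) < (i : ℕ) := by
      rcases lt_trichotomy (j' : ℕ) (i : ℕ) with h | h | h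
      · exact h
      · exfalso
        have heq : j' = i := Fin.ext h
        rw [heq] at hj'
        exact ha0i (hj' ▸ Finset.mem_insert_self (x a0) ((e i).erase (x w)))
      · exfalso
        have hl2 := he_lex i j' h
        rw [hj'] at hl2
        exact finsetLexLT_asymm hlexf hl2
    have hxa0F : x a0 ∈ F := hEjF ha0j
    rcases hFsub (Finset.mem_coe.mpr hxa0F) with h | h
    · exact ha0i h
    · refine h.2 j' hj'i ?_
      rw [hj']
      exact Finset.insert_subset_insert _ (Finset.erase_subset _ _)
  · -- Ω m = CH_t(G \ x0)
    ext F
    simp only [Set.mem_setOf_eq]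
    constructor
    · rintro ⟨hclF, hall⟩
      refine ⟨hclF, ?_⟩
      intro hx0F
      have hFr : ∀ v ∈ F, ∃ k : Fin d, x k = v := by
        intro v hv
        by_cases hvx : v = x ⟨0, hd0⟩
        · exact ⟨⟨0, hd0⟩, hvx.symm⟩
        · have hadj : G.Adj (x ⟨0, hd0⟩) v := hclF.1 (Finset.mem_coe.mpr hx0F)
            (Finset.mem_coe.mpr hv) (Ne.symm hvx)
          have hvn : v ∈ G.neighborSet (x ⟨0, hd0⟩) := hadj
          rw [hx0nbhd] at hvn
          obtain ⟨k, _, hk⟩ := hvn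
          exact ⟨k, hk⟩
      have hx0F' : x ⟨0, hd0⟩ ∈ F.erase (x ⟨d - 1, hd1⟩) := by
        refine Finset.mem_erase.mpr ⟨?_, hx0F⟩
        intro h
        have h2 : (⟨0, hd0⟩ : Fin d) = ⟨d - 1, hd1⟩ := hxinj h
        have : (0 : ℕ) = d - 1 := congrArg Fin.val h2
        omega
      have hcard' : t - 1 ≤ (F.erase (x ⟨d - 1, hd1⟩)).card := by
        have h1 := Finset.pred_card_le_card_erase (s := F) (a := x ⟨d - 1, hd1⟩)
        rw [hclF.2] at h1
        omega
      obtain ⟨u, hu1, hu2, hu3⟩ := Finset.exists_subsuperset_card_eq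
        (n := t - 2 + ({x ⟨0, hd0⟩} : Finset V).card)
        (Finset.singleton_subset_iff.mpr hx0F') (by omega)
        (by rw [Finset.card_singleton]; omega)
      have husub : (↑u : Set V) ⊆ x '' {k : Fin d | (k : ℕ) < d - 1} := by
        intro v hv
        have hvF' : v ∈ F.erase (x ⟨d - 1, hd1⟩) := hu2 (Finset.mem_coe.mp hv)
        obtain ⟨k, hk⟩ := hFr v (Finset.mem_of_mem_erase hvF')
        have hkne : (k : ℕ) ≠ d - 1 := by
          intro hkd
          have : k = ⟨d - 1, hd1⟩ := Fin.ext hkd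
          rw [this] at hk
          exact (Finset.mem_erase.mp hvF').1 hk.symm
        refine ⟨k, ?_, hk⟩
        show (k : ℕ) < d - 1
        have := k.isLt
        omega
      obtain ⟨j, hj⟩ := he_surj u (hu1 (Finset.mem_singleton_self _))
        (by rw [hu3, Finset.card_singleton]; omega) husub
      exact hall j j.isLt (hj ▸ (hu2.trans (Finset.erase_subset _ _)))
    · rintro ⟨hclF, hx0F⟩
      exact ⟨hclF, fun j _ hsub => hx0F (hsub (he_mem j).1)⟩
end
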